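/- arXiv:2508.02327 — 7 statements merged into one kernel-verified Lean document; each statement's English description precedes it below -/
import Mathlib

section
/- Let 0 < a < b and 0 < y ≤ 1. Then ((b+y)/(a+y))^(1-y) · (a/b) ≤ B(b,y)/B(a,y) ≤ (a/b)^y. -/
open Real MeasureTheory intervalIntegral

noncomputable def B (x y : ℝ) : ℝ := ∫ t in (0:ℝ)..1, t ^ (x - 1) * (1 - t) ^ (y - 1)

open Filter Finset Topology in
private lemma key_mono' {y u v : ℝ} (hy0 : 0 ≤ y) (hy1 : y ≤ 1) (hu : 0 < u) (huv : u ≤ v) :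
    (1 - y) * Real.log u + y * Real.log (u + 1) - Real.log (u + y) ≤
      (1 - y) * Real.log v + y * Real.log (v + 1) - Real.log (v + y) := by
  set f : ℝ → ℝ := fun w => (1 - y) * Real.log w + y * Real.log (w + 1) - Real.log (w + y) with hf
  have hderiv : ∀ w : ℝ, 0 < w → HasDerivAt f
      ((1 - y) * (1/w) + y * (1/(w+1)) - 1/(w+y)) w := by
    intro w hw0
    have h1 : HasDerivAt (fun w : ℝ => Real.log w) (1/w) w := by
      simpa [one_div] using Real.hasDerivAt_log hw0.ne'
    have h2 : HasDerivAt (fun w : ℝ => Real.log (w+1)) (1/(w+1)) w := by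
      have := ((hasDerivAt_id w).add_const 1).log (by positivity)
      simpa [one_div] using this
    have h3 : HasDerivAt (fun w : ℝ => Real.log (w+y)) (1/(w+y)) w := by
      have := ((hasDerivAt_id w).add_const y).log (by positivity)
      simpa [one_div] using this
    exact ((h1.const_mul (1-y)).add (h2.const_mul y)).sub h3
  have hmono : MonotoneOn f (Set.Ici u) := by
    apply monotoneOn_of_deriv_nonneg (convex_Ici u)
    · intro w hw
      exact (hderiv w (lt_of_lt_of_le hu hw)).continuousAt.continuousWithinAt
    · intro w hw
      rw [interior_Ici, Set.mem_Ioi] at hw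
      exact (hderiv w (hu.trans hw)).differentiableAt.differentiableWithinAt
    · intro w hw
      rw [interior_Ici, Set.mem_Ioi] at hw
      have hw0 : 0 < w := hu.trans hw
      rw [(hderiv w hw0).deriv]
      have key : (1 - y) * (1/w) + y * (1/(w+1)) - 1/(w+y) =
          (y * (1 - y)) / (w * (w+1) * (w+y)) := by
        field_simp
        ring
      rw [key]
      apply div_nonneg (by nlinarith) (by positivity)
  exact hmono (Set.self_mem_Ici) (Set.mem_Ici.2 huv) huv

open Filter Finset Topology in
private lemma log_gammaSeq' {s : ℝ} (hs : 0 < s) {n : ℕ} (hn : 1 ≤ n) :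
    Real.log (Real.GammaSeq s n) = s * Real.log n + Real.log (Nat.factorial n) -
      ∑ j ∈ Finset.range (n+1), Real.log (s + j) := by
  have hn0 : (0:ℝ) < n := by exact_mod_cast hn
  have hprod : ∀ j ∈ Finset.range (n+1), (0:ℝ) < s + j := by
    intro j _; positivity
  have hprodpos : (0:ℝ) < ∏ j ∈ Finset.range (n+1), (s + (j:ℝ)) := Finset.prod_pos hprod
  rw [Real.GammaSeq, Real.log_div (by positivity) hprodpos.ne', Real.log_mul (by positivity)
    (by positivity), Real.log_rpow hn0, Real.log_prod (fun j hj => (hprod j hj).ne')]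

open Filter Finset Topology in
private lemma L_mono' {y a b : ℝ} (hy0 : 0 < y) (hy1 : y ≤ 1) (ha : 0 < a) (hab : a ≤ b) :
    Real.log (Real.Gamma (a+y)) - (1-y) * Real.log (Real.Gamma a)
      - y * Real.log (Real.Gamma (a+1)) ≤
    Real.log (Real.Gamma (b+y)) - (1-y) * Real.log (Real.Gamma b)
      - y * Real.log (Real.Gamma (b+1)) := by
  have hb : 0 < b := lt_of_lt_of_le ha hab
  set S : ℝ → ℕ → ℝ := fun x n => Real.log (Real.GammaSeq (x+y) n)
    - (1-y) * Real.log (Real.GammaSeq x n) - y * Real.log (Real.GammaSeq (x+1) n) with hS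
  have htend : ∀ x : ℝ, 0 < x → Tendsto (S x) atTop (𝓝 (Real.log (Real.Gamma (x+y))
      - (1-y) * Real.log (Real.Gamma x) - y * Real.log (Real.Gamma (x+1)))) := by
    intro x hx
    have h1 := (Real.GammaSeq_tendsto_Gamma (x+y)).log (Real.Gamma_pos_of_pos (by linarith)).ne'
    have h2 := (Real.GammaSeq_tendsto_Gamma x).log (Real.Gamma_pos_of_pos hx).ne'
    have h3 := (Real.GammaSeq_tendsto_Gamma (x+1)).log (Real.Gamma_pos_of_pos (by linarith)).ne'
    exact (h1.sub ((h2.const_mul (1-y)))).sub (h3.const_mul y)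
  have hexp : ∀ x : ℝ, 0 < x → ∀ n : ℕ, 1 ≤ n → S x n =
      ∑ j ∈ Finset.range (n+1),
        ((1-y) * Real.log (x+j) + y * Real.log (x+1+j) - Real.log (x+y+j)) := by
    intro x hx n hn
    have e1 := log_gammaSeq' (s := x+y) (by linarith) hn
    have e2 := log_gammaSeq' (s := x) hx hn
    have e3 := log_gammaSeq' (s := x+1) (by linarith) hn
    have hcomb : ∑ j ∈ Finset.range (n+1),
        ((1-y) * Real.log (x+j) + y * Real.log (x+1+j) - Real.log (x+y+j))
        = (1-y) * (∑ j ∈ Finset.range (n+1), Real.log (x+j))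
          + y * (∑ j ∈ Finset.range (n+1), Real.log (x+1+j))
          - ∑ j ∈ Finset.range (n+1), Real.log (x+y+j) := by
      rw [Finset.sum_sub_distrib, Finset.sum_add_distrib, Finset.mul_sum, Finset.mul_sum]
    rw [hS]
    simp only []
    rw [e1, e2, e3, hcomb]
    ring
  apply le_of_tendsto_of_tendsto (htend a ha) (htend b hb)
  filter_upwards [eventually_ge_atTop 1] with n hn
  rw [hexp a ha n hn, hexp b hb n hn]
  apply Finset.sum_le_sum
  intro j _
  have h := key_mono' hy0.le hy1 (by positivity : (0:ℝ) < a + j) (by linarith : a + (j:ℝ) ≤ b + j)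
  rw [show a+1+(j:ℝ) = a+j+1 by ring, show a+y+(j:ℝ) = a+j+y by ring,
    show b+1+(j:ℝ) = b+j+1 by ring, show b+y+(j:ℝ) = b+j+y by ring]
  exact h

open Filter Finset Topology in
private lemma M_mono' {y a b : ℝ} (hy0 : 0 < y) (hy1 : y ≤ 1) (ha : 0 < a) (hab : a ≤ b) :
    Real.log (Real.Gamma (a+1)) - y * Real.log (Real.Gamma (a+y))
      - (1-y) * Real.log (Real.Gamma (a+y+1)) ≤
    Real.log (Real.Gamma (b+1)) - y * Real.log (Real.Gamma (b+y))
      - (1-y) * Real.log (Real.Gamma (b+y+1)) := by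
  have hb : 0 < b := lt_of_lt_of_le ha hab
  set S : ℝ → ℕ → ℝ := fun x n => Real.log (Real.GammaSeq (x+1) n)
    - y * Real.log (Real.GammaSeq (x+y) n) - (1-y) * Real.log (Real.GammaSeq (x+y+1) n) with hS
  have htend : ∀ x : ℝ, 0 < x → Tendsto (S x) atTop (𝓝 (Real.log (Real.Gamma (x+1))
      - y * Real.log (Real.Gamma (x+y)) - (1-y) * Real.log (Real.Gamma (x+y+1)))) := by
    intro x hx
    have h1 := (Real.GammaSeq_tendsto_Gamma (x+1)).log (Real.Gamma_pos_of_pos (by linarith)).ne'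
    have h2 := (Real.GammaSeq_tendsto_Gamma (x+y)).log (Real.Gamma_pos_of_pos (by linarith)).ne'
    have h3 := (Real.GammaSeq_tendsto_Gamma (x+y+1)).log (Real.Gamma_pos_of_pos (by linarith)).ne'
    exact (h1.sub ((h2.const_mul y))).sub (h3.const_mul (1-y))
  have hexp : ∀ x : ℝ, 0 < x → ∀ n : ℕ, 1 ≤ n → S x n =
      ∑ j ∈ Finset.range (n+1),
        (y * Real.log (x+y+j) + (1-y) * Real.log (x+y+1+j) - Real.log (x+1+j)) := by
    intro x hx n hn
    have e1 := log_gammaSeq' (s := x+1) (by linarith) hn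
    have e2 := log_gammaSeq' (s := x+y) (by linarith) hn
    have e3 := log_gammaSeq' (s := x+y+1) (by linarith) hn
    have hcomb : ∑ j ∈ Finset.range (n+1),
        (y * Real.log (x+y+j) + (1-y) * Real.log (x+y+1+j) - Real.log (x+1+j))
        = y * (∑ j ∈ Finset.range (n+1), Real.log (x+y+j))
          + (1-y) * (∑ j ∈ Finset.range (n+1), Real.log (x+y+1+j))
          - ∑ j ∈ Finset.range (n+1), Real.log (x+1+j) := by
      rw [Finset.sum_sub_distrib, Finset.sum_add_distrib, Finset.mul_sum, Finset.mul_sum]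
    rw [hS]
    simp only []
    rw [e1, e2, e3, hcomb]
    ring
  apply le_of_tendsto_of_tendsto (htend a ha) (htend b hb)
  filter_upwards [eventually_ge_atTop 1] with n hn
  rw [hexp a ha n hn, hexp b hb n hn]
  apply Finset.sum_le_sum
  intro j _
  have h := key_mono' (y := 1-y) (by linarith) (by linarith)
    (by positivity : (0:ℝ) < a + y + j) (by linarith : a + y + (j:ℝ) ≤ b + y + j)
  rw [show a+y+1+(j:ℝ) = a+y+j+1 by ring, show a+1+(j:ℝ) = a+y+j+(1-y) by ring,
    show b+y+1+(j:ℝ) = b+y+j+1 by ring, show b+1+(j:ℝ) = b+y+j+(1-y) by ring]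
  linarith [h]

private lemma B_eq' {x y : ℝ} (hx : 0 < x) (hy : 0 < y) :
    B x y = Real.Gamma x * Real.Gamma y / Real.Gamma (x + y) := by
  have hB : Complex.betaIntegral x y = (B x y : ℂ) := by
    rw [Complex.betaIntegral, B, ← intervalIntegral.integral_ofReal]
    apply intervalIntegral.integral_congr
    intro t ht
    rw [Set.uIcc_of_le (by norm_num : (0:ℝ) ≤ 1)] at ht
    simp only []
    rw [Complex.ofReal_mul, Complex.ofReal_cpow ht.1, Complex.ofReal_cpow (by linarith [ht.2])]
    push_cast
    ring
  have h := Complex.Gamma_mul_Gamma_eq_betaIntegral (s := (x:ℂ)) (t := (y:ℂ))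
    (by simpa using hx) (by simpa using hy)
  rw [hB] at h
  have hxy : (↑x + ↑y : ℂ) = ((x + y : ℝ) : ℂ) := by push_cast; ring
  rw [hxy, Complex.Gamma_ofReal, Complex.Gamma_ofReal, Complex.Gamma_ofReal] at h
  have h' : Real.Gamma x * Real.Gamma y = Real.Gamma (x + y) * B x y := by
    exact_mod_cast h
  field_simp [(Real.Gamma_pos_of_pos (by linarith : 0 < x + y)).ne']
  linarith [h']

theorem stmt1 (a b y : ℝ) (ha : 0 < a) (hab : a < b) (hy0 : 0 < y) (hy1 : y ≤ 1) :
    ((b + y) / (a + y)) ^ (1 - y) * (a / b) ≤ B b y / B a y ∧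
      B b y / B a y ≤ (a / b) ^ y := by
  have hb : 0 < b := ha.trans hab
  have hy : 0 < y := hy0
  have hGa := Real.Gamma_pos_of_pos ha
  have hGb := Real.Gamma_pos_of_pos hb
  have hGy := Real.Gamma_pos_of_pos hy
  have hGay := Real.Gamma_pos_of_pos (by linarith : (0:ℝ) < a + y)
  have hGby := Real.Gamma_pos_of_pos (by linarith : (0:ℝ) < b + y)
  have hBa : B a y = Real.Gamma a * Real.Gamma y / Real.Gamma (a + y) := B_eq' ha hy
  have hBb : B b y = Real.Gamma b * Real.Gamma y / Real.Gamma (b + y) := B_eq' hb hy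
  have hBa0 : 0 < B a y := by rw [hBa]; positivity
  have hBb0 : 0 < B b y := by rw [hBb]; positivity
  have hlogBa : Real.log (B a y) =
      Real.log (Real.Gamma a) + Real.log (Real.Gamma y) - Real.log (Real.Gamma (a + y)) := by
    rw [hBa, Real.log_div (by positivity) hGay.ne', Real.log_mul hGa.ne' hGy.ne']
  have hlogBb : Real.log (B b y) =
      Real.log (Real.Gamma b) + Real.log (Real.Gamma y) - Real.log (Real.Gamma (b + y)) := by
    rw [hBb, Real.log_div (by positivity) hGby.ne', Real.log_mul hGb.ne' hGy.ne']
  -- rewrite Gamma (x+1) = x * Gamma x in L_mono'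
  have hGa1 : Real.log (Real.Gamma (a + 1)) = Real.log a + Real.log (Real.Gamma a) := by
    rw [Real.Gamma_add_one ha.ne', Real.log_mul ha.ne' hGa.ne']
  have hGb1 : Real.log (Real.Gamma (b + 1)) = Real.log b + Real.log (Real.Gamma b) := by
    rw [Real.Gamma_add_one hb.ne', Real.log_mul hb.ne' hGb.ne']
  have hGay1 : Real.log (Real.Gamma (a + y + 1)) =
      Real.log (a + y) + Real.log (Real.Gamma (a + y)) := by
    rw [Real.Gamma_add_one (by positivity : a + y ≠ 0), Real.log_mul (by positivity) hGay.ne']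
  have hGby1 : Real.log (Real.Gamma (b + y + 1)) =
      Real.log (b + y) + Real.log (Real.Gamma (b + y)) := by
    rw [Real.Gamma_add_one (by positivity : b + y ≠ 0), Real.log_mul (by positivity) hGby.ne']
  have hL := L_mono' hy0 hy1 ha hab.le
  rw [hGa1, hGb1] at hL
  have hM := M_mono' hy0 hy1 ha hab.le
  rw [hGa1, hGb1, hGay1, hGby1] at hM
  constructor
  · -- lower bound
    apply (Real.log_le_log_iff (by positivity) (div_pos hBb0 hBa0)).mp
    rw [Real.log_div hBb0.ne' hBa0.ne', hlogBa, hlogBb,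
      Real.log_mul (by positivity) (by positivity),
      Real.log_rpow (by positivity), Real.log_div (by positivity) (by positivity),
      Real.log_div ha.ne' hb.ne']
    linarith [hM]
  · -- upper bound
    apply (Real.log_le_log_iff (div_pos hBb0 hBa0) (by positivity)).mp
    rw [Real.log_div hBb0.ne' hBa0.ne', hlogBa, hlogBb,
      Real.log_rpow (div_pos ha hb), Real.log_div ha.ne' hb.ne']
    linarith [hL]
end

section
/- Let 0 < a < b and y > 1. Then (a/b)^y ≤ B(b,y)/B(a,y) ≤ ((b+y)/(a+y))^(1-y) · (a/b). -/
open Real MeasureTheory intervalIntegral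

open Set

lemma contOn_factor {p q : ℝ} {s : Set ℝ} (hs : ∀ t ∈ s, 0 < t ∧ t < 1) :
    ContinuousOn (fun t : ℝ => t ^ p * (1 - t) ^ q) s := by
  intro t ht
  obtain ⟨h0, h1⟩ := hs t ht
  exact (((Real.continuousAt_rpow_const t p (Or.inl h0.ne')).mul
    ((Real.continuousAt_rpow_const (1-t) q (Or.inl (by linarith))).comp
      (by fun_prop))).continuousWithinAt)

lemma II_half {p q : ℝ} (hp : -1 < p) :
    IntervalIntegrable (fun t : ℝ => t ^ p * (1 - t) ^ q) volume 0 (1/2) := by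
  have hg : IntervalIntegrable (fun t : ℝ => ((1/2:ℝ) ^ q + 1) * t ^ p) volume 0 (1/2) :=
    (intervalIntegrable_rpow' hp).const_mul _
  apply hg.mono_fun
  · apply ContinuousOn.aestronglyMeasurable _ measurableSet_uIoc
    rw [uIoc_of_le (by norm_num : (0:ℝ) ≤ 1/2)]
    exact contOn_factor (fun t ht => ⟨ht.1, by rcases ht with ⟨h1, h2⟩; linarith⟩)
  · rw [Filter.EventuallyLE, ae_restrict_iff' measurableSet_uIoc]
    filter_upwards with t ht
    rw [uIoc_of_le (by norm_num : (0:ℝ) ≤ 1/2)] at ht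
    obtain ⟨ht0, ht1⟩ := ht
    have h1t : (1:ℝ)/2 ≤ 1 - t := by linarith
    have h1t' : (1:ℝ) - t ≤ 1 := by linarith
    have hb : (1 - t) ^ q ≤ (1/2:ℝ) ^ q + 1 := by
      rcases le_or_gt 0 q with hq | hq
      · have h2 : (0:ℝ) ≤ (1/2:ℝ) ^ q := Real.rpow_nonneg (by norm_num) q
        linarith [Real.rpow_le_one (by linarith : (0:ℝ) ≤ 1 - t) h1t' hq]
      · have := Real.rpow_le_rpow_of_nonpos (by norm_num : (0:ℝ) < 1/2) h1t hq.le
        linarith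
    simp only [Real.norm_eq_abs]
    rw [abs_of_nonneg (by positivity), abs_of_nonneg (by positivity)]
    calc t ^ p * (1 - t) ^ q ≤ t ^ p * ((1/2:ℝ) ^ q + 1) :=
          mul_le_mul_of_nonneg_left hb (Real.rpow_nonneg ht0.le p)
      _ = ((1/2:ℝ) ^ q + 1) * t ^ p := mul_comm _ _

lemma II_beta {p q : ℝ} (hp : -1 < p) (hq : -1 < q) :
    IntervalIntegrable (fun t : ℝ => t ^ p * (1 - t) ^ q) volume 0 1 := by
  refine (II_half hp).trans ?_
  have h := (II_half (p := q) (q := p) hq).comp_sub_left 1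
  norm_num at h
  have h2 := h.symm
  apply h2.congr
  intro t _
  simp [sub_sub_cancel, mul_comm]

lemma neg_log_le {t ε : ℝ} (ht : 0 < t) (hε : 0 < ε) :
    -Real.log t ≤ t ^ (-ε) / ε := by
  have h2 : (0:ℝ) < t ^ (-ε) := Real.rpow_pos_of_pos ht _
  have h3 := Real.log_le_sub_one_of_pos h2
  rw [Real.log_rpow ht] at h3
  rw [le_div_iff₀ hε]
  nlinarith

lemma II_beta_log {p q : ℝ} (hp : -1 < p) (hq : -1 < q) :
    IntervalIntegrable (fun t : ℝ => t ^ p * (1 - t) ^ q * (-Real.log t)) volume 0 1 := by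
  set ε := (p+1)/2 with hε_def
  have hε : 0 < ε := by simp only [hε_def]; linarith
  have hg : IntervalIntegrable (fun t : ℝ => (1/ε) * (t ^ (p - ε) * (1 - t) ^ q)) volume 0 1 :=
    (II_beta (by rw [hε_def] at *; linarith : -1 < p - ε) hq).const_mul _
  apply hg.mono_fun
  · exact ((by fun_prop : Measurable fun t : ℝ => t ^ p * (1 - t) ^ q).mul
      Real.measurable_log.neg).aestronglyMeasurable
  · rw [Filter.EventuallyLE, ae_restrict_iff' measurableSet_uIoc]
    filter_upwards with t ht
    rw [uIoc_of_le (by norm_num : (0:ℝ) ≤ 1)] at ht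
    obtain ⟨ht0, ht1⟩ := ht
    have hlog : 0 ≤ -Real.log t := by
      simpa using Real.log_nonpos ht0.le ht1
    have hb : -Real.log t ≤ t ^ (-ε) / ε := neg_log_le ht0 hε
    have h1 : (0:ℝ) ≤ t ^ p * (1 - t) ^ q :=
      mul_nonneg (Real.rpow_nonneg ht0.le _) (Real.rpow_nonneg (by linarith) _)
    simp only [Real.norm_eq_abs]
    rw [abs_of_nonneg (mul_nonneg h1 hlog),
      abs_of_nonneg (mul_nonneg (by positivity)
        (mul_nonneg (Real.rpow_nonneg ht0.le _) (Real.rpow_nonneg (by linarith) _)))]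
    have key : t ^ p * (1 - t) ^ q * (-Real.log t) ≤ t ^ p * (1 - t) ^ q * (t ^ (-ε) / ε) :=
      mul_le_mul_of_nonneg_left hb h1
    refine key.trans (le_of_eq ?_)
    rw [Real.rpow_sub ht0, Real.rpow_neg ht0.le]
    ring

lemma II_log_form1 {p q : ℝ} (hp : -1 < p) (hq : -1 < q) :
    IntervalIntegrable (fun t : ℝ => Real.log t * (t ^ p * (1 - t) ^ q)) volume 0 1 :=
  (II_beta_log hp hq).neg.congr (by intro t _; simp only [Pi.neg_apply]; ring)

lemma II_log_form2 {p q : ℝ} (hp : -1 < p) (hq : -1 < q) :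
    IntervalIntegrable (fun t : ℝ => t ^ p * (1 - t) ^ q * Real.log t) volume 0 1 :=
  (II_beta_log hp hq).neg.congr (by intro t _; simp only [Pi.neg_apply]; ring)

lemma cont_rpow {x : ℝ} (hx : 0 < x) : Continuous fun t : ℝ => t ^ x :=
  Real.continuous_rpow_const hx.le

lemma cont_one_sub_rpow {x : ℝ} (hx : 0 < x) : Continuous fun t : ℝ => (1 - t) ^ x :=
  (cont_rpow hx).comp (continuous_const.sub continuous_id)

lemma contOn_rpow_log {x : ℝ} (hx : 0 < x) :
    ContinuousOn (fun t : ℝ => t ^ x * Real.log t) (Icc 0 1) := by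
  have hg : Continuous fun t : ℝ => (1/x) * (t ^ x * Real.log (t ^ x)) := by
    exact continuous_const.mul ((Real.continuous_mul_log).comp (cont_rpow hx))
  apply hg.continuousOn.congr
  intro t ht
  dsimp only
  rcases eq_or_lt_of_le ht.1 with h | h
  · simp [← h, Real.zero_rpow hx.ne']
  · rw [Real.log_rpow h]
    field_simp

lemma recurrence {x y : ℝ} (hx : 0 < x) (hy : 0 < y) :
    x * ∫ t in (0:ℝ)..1, t ^ (x - 1) * (1 - t) ^ (y - 1)
      = (x + y) * ∫ t in (0:ℝ)..1, t ^ x * (1 - t) ^ (y - 1) := by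
  have hx1 : (-1:ℝ) < x - 1 := by linarith
  have hy1 : (-1:ℝ) < y - 1 := by linarith
  have hDeriv : ∀ t ∈ Ioo (0:ℝ) 1,
      HasDerivAt (fun t : ℝ => t ^ x * (1 - t) ^ y)
        (x * (t ^ (x-1) * (1 - t) ^ y) - y * (t ^ x * (1 - t) ^ (y-1))) t := by
    intro t ht
    have h1 : HasDerivAt (fun t : ℝ => t ^ x) (x * t ^ (x-1)) t :=
      Real.hasDerivAt_rpow_const (Or.inl ht.1.ne')
    have h0 : HasDerivAt (fun t : ℝ => 1 - t) (-1) t := by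
      have := (hasDerivAt_id t).const_sub (1:ℝ)
      simpa using this
    have h2 : HasDerivAt (fun t : ℝ => (1 - t) ^ y) (-1 * y * (1 - t) ^ (y-1)) t :=
      HasDerivAt.rpow_const h0 (Or.inl (sub_ne_zero_of_ne (ne_of_gt ht.2)))
    have := h1.mul h2
    refine this.congr_deriv ?_
    ring
  have hcont : ContinuousOn (fun t : ℝ => t ^ x * (1 - t) ^ y) (uIcc 0 1) :=
    ((cont_rpow hx).mul (cont_one_sub_rpow hy)).continuousOn
  have hint : IntervalIntegrable
      (fun t : ℝ => x * (t ^ (x-1) * (1 - t) ^ y) - y * (t ^ x * (1 - t) ^ (y-1)))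
      volume 0 1 :=
    ((II_beta hx1 (by linarith)).const_mul x).sub ((II_beta (by linarith) hy1).const_mul y)
  have hFTC := intervalIntegral.integral_eq_sub_of_hasDeriv_right hcont
    (fun t ht => by
      have ht' : t ∈ Ioo (0:ℝ) 1 := by simpa using ht
      exact (hDeriv t ht').hasDerivWithinAt) hint
  rw [show ((1:ℝ)^x * (1-(1:ℝ))^y) - ((0:ℝ)^x * (1-(0:ℝ))^y) = 0 by
    simp [Real.zero_rpow hx.ne', Real.zero_rpow hy.ne']] at hFTC
  rw [intervalIntegral.integral_sub ((II_beta hx1 (by linarith)).const_mul x)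
    ((II_beta (by linarith) hy1).const_mul y),
    intervalIntegral.integral_const_mul, intervalIntegral.integral_const_mul] at hFTC
  have hsplit : ∫ t in (0:ℝ)..1, t ^ (x-1) * (1 - t) ^ y
      = (∫ t in (0:ℝ)..1, t ^ (x-1) * (1 - t) ^ (y-1))
        - ∫ t in (0:ℝ)..1, t ^ x * (1 - t) ^ (y-1) := by
    rw [← intervalIntegral.integral_sub (II_beta hx1 hy1) (II_beta (by linarith) hy1)]
    apply intervalIntegral.integral_congr_ae
    filter_upwards with t ht
    rw [uIoc_of_le (by norm_num : (0:ℝ) ≤ 1)] at ht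
    rcases eq_or_lt_of_le ht.2 with h | h
    · simp [h, Real.zero_rpow hy.ne', Real.one_rpow]
    · have h0 : (0:ℝ) < t := ht.1
      have h1 : (0:ℝ) < 1 - t := by linarith
      have e1 : t ^ x = t ^ (x-1) * t := by
        rw [← Real.rpow_add_one h0.ne' (x-1)]; norm_num
      have e2 : (1-t) ^ y = (1-t) ^ (y-1) * (1-t) := by
        rw [← Real.rpow_add_one h1.ne' (y-1)]; norm_num
      rw [e1, e2]; ring
  rw [hsplit] at hFTC
  linarith [hFTC]

lemma star_identity {x y : ℝ} (hx : 0 < x) (hy : 1 < y) :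
    (∫ t in (0:ℝ)..1, t ^ (x-1) * (1 - t) ^ (y-1))
      + x * ∫ t in (0:ℝ)..1, Real.log t * (t ^ (x-1) * (1 - t) ^ (y-1))
      = (y-1) * ∫ t in (0:ℝ)..1, t ^ x * (1 - t) ^ (y-2) * Real.log t := by
  have hx1 : (-1:ℝ) < x - 1 := by linarith
  have hy1 : (-1:ℝ) < y - 1 := by linarith
  have hy2 : (-1:ℝ) < y - 2 := by linarith
  set W : ℝ → ℝ := fun t => x * (Real.log t * (t ^ (x-1) * (1 - t) ^ (y-1)))
      + t ^ (x-1) * (1 - t) ^ (y-1) - (y-1) * (t ^ x * (1 - t) ^ (y-2) * Real.log t) with hW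
  have hDeriv : ∀ t ∈ Ioo (0:ℝ) 1,
      HasDerivAt (fun t : ℝ => t ^ x * Real.log t * (1 - t) ^ (y-1)) (W t) t := by
    intro t ht
    have h1 : HasDerivAt (fun t : ℝ => t ^ x) (x * t ^ (x-1)) t :=
      Real.hasDerivAt_rpow_const (Or.inl ht.1.ne')
    have h2 : HasDerivAt Real.log t⁻¹ t := Real.hasDerivAt_log ht.1.ne'
    have h0 : HasDerivAt (fun t : ℝ => 1 - t) (-1) t := by
      have := (hasDerivAt_id t).const_sub (1:ℝ)
      simpa using this
    have h3 : HasDerivAt (fun t : ℝ => (1 - t) ^ (y-1)) (-1 * (y-1) * (1 - t) ^ (y-2)) t := by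
      have h4 : HasDerivAt (fun t : ℝ => (1 - t) ^ (y-1)) (-1 * (y-1) * (1-t) ^ (y-1-1)) t :=
        HasDerivAt.rpow_const (p := y - 1) h0 (Or.inl (sub_ne_zero_of_ne (ne_of_gt ht.2)))
      convert h4 using 2
      ring
    have htot := (h1.mul h2).mul h3
    refine htot.congr_deriv ?_
    have e1 : t ^ x * t⁻¹ = t ^ (x-1) := by
      rw [Real.rpow_sub ht.1, Real.rpow_one]
      field_simp
    have e2 : t ^ x = t ^ (x-1) * t := by
      rw [← Real.rpow_add_one ht.1.ne' (x-1)]; norm_num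
    rw [hW]
    simp only [Pi.mul_apply]
    rw [← e1]
    ring
  have hcont : ContinuousOn (fun t : ℝ => t ^ x * Real.log t * (1 - t) ^ (y-1)) (uIcc 0 1) := by
    rw [uIcc_of_le (by norm_num : (0:ℝ) ≤ 1)]
    exact (contOn_rpow_log hx).mul (cont_one_sub_rpow (by linarith)).continuousOn
  have hi1 : IntervalIntegrable (fun t : ℝ => x * (Real.log t * (t ^ (x-1) * (1 - t) ^ (y-1))))
      volume 0 1 := (II_log_form1 hx1 hy1).const_mul x
  have hi2 := II_beta hx1 hy1
  have hi3 : IntervalIntegrable (fun t : ℝ => (y-1) * (t ^ x * (1 - t) ^ (y-2) * Real.log t))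
      volume 0 1 := (II_log_form2 (by linarith) hy2).const_mul _
  have hint : IntervalIntegrable W volume 0 1 := (hi1.add hi2).sub hi3
  have hFTC := intervalIntegral.integral_eq_sub_of_hasDeriv_right hcont
    (fun t ht => by
      have ht' : t ∈ Ioo (0:ℝ) 1 := by simpa using ht
      exact (hDeriv t ht').hasDerivWithinAt) hint
  have hzero : ((1:ℝ) ^ x * Real.log 1 * (1 - (1:ℝ)) ^ (y-1))
      - ((0:ℝ) ^ x * Real.log 0 * (1 - (0:ℝ)) ^ (y-1)) = 0 := by
    simp [Real.zero_rpow hx.ne']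
  rw [hzero] at hFTC
  have hsplit : ∫ t in (0:ℝ)..1, W t
      = (∫ t in (0:ℝ)..1, x * (Real.log t * (t ^ (x-1) * (1 - t) ^ (y-1))))
        + (∫ t in (0:ℝ)..1, t ^ (x-1) * (1 - t) ^ (y-1))
        - ∫ t in (0:ℝ)..1, (y-1) * (t ^ x * (1 - t) ^ (y-2) * Real.log t) := by
    rw [← intervalIntegral.integral_add hi1 hi2, ← intervalIntegral.integral_sub (hi1.add hi2) hi3]
  rw [hsplit] at hFTC
  rw [intervalIntegral.integral_const_mul] at hFTC
  rw [intervalIntegral.integral_const_mul] at hFTC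
  linarith [hFTC]

lemma hasDerivAt_B {x y : ℝ} (hx : 0 < x) (hy : 1 < y) :
    HasDerivAt (fun x => B x y)
      (∫ t in (0:ℝ)..1, Real.log t * (t ^ (x-1) * (1 - t) ^ (y-1))) x := by
  have hy1 : (-1:ℝ) < y - 1 := by linarith
  have hε : 0 < x/2 := by linarith
  have key := intervalIntegral.hasDerivAt_integral_of_dominated_loc_of_deriv_le
    (F := fun x t => t ^ (x-1) * (1 - t) ^ (y-1))
    (F' := fun x t => Real.log t * (t ^ (x-1) * (1 - t) ^ (y-1)))
    (x₀ := x) (a := 0) (b := 1) (μ := volume)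
    (bound := fun t => t ^ (x/2 - 1) * (1 - t) ^ (y-1) * (-Real.log t))
    (Metric.ball_mem_nhds x hε) ?meas ?int ?meas' ?bound ?bint ?diff
  · exact key.2
  case meas =>
    filter_upwards with x'
    exact ((by fun_prop : Measurable fun t : ℝ => t ^ (x'-1) * (1-t) ^ (y-1))).aestronglyMeasurable
  case int => exact II_beta (by linarith) hy1
  case meas' =>
    exact ((Real.measurable_log.mul (by fun_prop))).aestronglyMeasurable
  case bound =>
    filter_upwards with t ht x' hx'
    rw [uIoc_of_le (by norm_num : (0:ℝ) ≤ 1)] at ht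
    obtain ⟨ht0, ht1⟩ := ht
    have hlog : 0 ≤ -Real.log t := by simpa using Real.log_nonpos ht0.le ht1
    have hx'2 : x/2 - 1 ≤ x' - 1 := by
      have := abs_lt.mp (by simpa [Real.dist_eq] using (Metric.mem_ball.mp hx'))
      linarith [this.1]
    have hmono : t ^ (x'-1) ≤ t ^ (x/2-1) :=
      Real.rpow_le_rpow_of_exponent_ge ht0 ht1 hx'2
    have h1 : (0:ℝ) ≤ (1-t) ^ (y-1) := Real.rpow_nonneg (by linarith) _
    have : ‖Real.log t * (t ^ (x'-1) * (1-t) ^ (y-1))‖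
        = (-Real.log t) * (t ^ (x'-1) * (1-t) ^ (y-1)) := by
      rw [Real.norm_eq_abs, abs_mul, abs_of_nonpos (by linarith : Real.log t ≤ 0),
        abs_of_nonneg (mul_nonneg (Real.rpow_nonneg ht0.le _) h1)]
    rw [this]
    calc (-Real.log t) * (t ^ (x'-1) * (1-t) ^ (y-1))
        ≤ (-Real.log t) * (t ^ (x/2-1) * (1-t) ^ (y-1)) := by
          apply mul_le_mul_of_nonneg_left (mul_le_mul_of_nonneg_right hmono h1) hlog
      _ = t ^ (x/2 - 1) * (1 - t) ^ (y-1) * (-Real.log t) := by ring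
  case bint => exact II_beta_log (by linarith) hy1
  case diff =>
    filter_upwards with t ht x' _
    rw [uIoc_of_le (by norm_num : (0:ℝ) ≤ 1)] at ht
    obtain ⟨ht0, ht1⟩ := ht
    rcases eq_or_lt_of_le ht1 with h1 | h1
    · -- t = 1
      have : (fun x : ℝ => t ^ (x-1) * (1-t) ^ (y-1)) = fun _ => 0 := by
        funext u
        rw [h1]
        simp [Real.zero_rpow (by linarith : y - 1 ≠ 0)]
      rw [this, h1]
      simpa using hasDerivAt_const x' (0:ℝ)
    · have hd : HasDerivAt (fun u : ℝ => Real.exp ((u-1) * Real.log t))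
          (Real.exp ((x'-1) * Real.log t) * Real.log t) x' := by
        have h : HasDerivAt (fun u : ℝ => (u-1) * Real.log t) (Real.log t) x' := by
          simpa using (((hasDerivAt_id x').sub_const 1).mul_const (Real.log t))
        exact h.exp
      have heq : (fun u : ℝ => Real.exp ((u-1) * Real.log t))
          = fun u : ℝ => t ^ (u-1) := by
        funext u
        rw [Real.rpow_def_of_pos ht0, mul_comm]
      rw [heq] at hd
      have := hd.mul_const ((1-t) ^ (y-1))
      refine this.congr_deriv ?_
      rw [show rexp ((x'-1) * Real.log t) = t ^ (x'-1) by
        rw [Real.rpow_def_of_pos ht0, mul_comm]]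
      ring

lemma B_pos {x y : ℝ} (hx : 0 < x) (hy : 1 < y) : 0 < B x y := by
  apply intervalIntegral_pos_of_pos_on (II_beta (by linarith) (by linarith))
  · intro t ht
    have h1 : (0:ℝ) < 1 - t := by linarith [ht.2]
    exact mul_pos (Real.rpow_pos_of_pos ht.1 _) (Real.rpow_pos_of_pos h1 _)
  · norm_num

lemma J_ge {x y : ℝ} (hx : 0 < x) (hy : 1 < y) :
    -(B x y) ≤ ∫ t in (0:ℝ)..1, t ^ x * (1 - t) ^ (y-2) * Real.log t := by
  have h1 : -(B x y) = ∫ t in (0:ℝ)..1, -(t ^ (x-1) * (1 - t) ^ (y-1)) := by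
    rw [intervalIntegral.integral_neg]; rfl
  rw [h1]
  apply intervalIntegral.integral_mono_on (by norm_num)
    (II_beta (by linarith) (by linarith)).neg (II_log_form2 (by linarith) (by linarith))
  intro t ht
  rcases eq_or_lt_of_le ht.1 with h0 | h0
  · simp [← h0, Real.zero_rpow hx.ne']
    positivity
  rcases eq_or_lt_of_le ht.2 with h1 | h1
  · rw [h1]
    simp [Real.zero_rpow (by linarith : y - 1 ≠ 0)]
  have hfac : (0:ℝ) ≤ t ^ (x-1) * (1 - t) ^ (y-2) := by
    have : (0:ℝ) < 1 - t := by linarith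
    positivity
  have hbr : 0 ≤ (1 - t) + t * Real.log t := by
    have hinv := Real.log_le_sub_one_of_pos (show (0:ℝ) < t⁻¹ by positivity)
    rw [Real.log_inv] at hinv
    have := mul_le_mul_of_nonneg_left hinv h0.le
    rw [mul_sub, mul_inv_cancel₀ h0.ne'] at this
    nlinarith
  have e1 : t ^ x = t ^ (x-1) * t := by
    rw [show x = x - 1 + 1 by ring, Real.rpow_add_one h0.ne' (x-1)]
    ring_nf
  have e2 : (1-t) ^ (y-1) = (1-t) ^ (y-2) * (1-t) := by
    rw [show y - 1 = y - 2 + 1 by ring,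
      Real.rpow_add_one (by intro hc; linarith [hc] : (1:ℝ) - t ≠ 0) (y-2)]
  have key : 0 ≤ t ^ (x-1) * (1 - t) ^ (y-2) * ((1 - t) + t * Real.log t) :=
    mul_nonneg hfac hbr
  simp only [Pi.neg_apply]
  rw [e1, e2]
  nlinarith [key]

lemma J_le {x y : ℝ} (hx : 0 < x) (hy : 1 < y) :
    (∫ t in (0:ℝ)..1, t ^ x * (1 - t) ^ (y-2) * Real.log t) ≤ -(B (x+1) y) := by
  have h1 : -(B (x+1) y) = ∫ t in (0:ℝ)..1, -(t ^ (x+1-1) * (1 - t) ^ (y-1)) := by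
    rw [intervalIntegral.integral_neg]; rfl
  rw [h1]
  apply intervalIntegral.integral_mono_on (by norm_num)
    (II_log_form2 (by linarith) (by linarith))
    (II_beta (p := x+1-1) (by norm_num; linarith) (by linarith)).neg
  intro t ht
  rcases eq_or_lt_of_le ht.1 with h0 | h0
  · simp [← h0, Real.zero_rpow hx.ne', Real.zero_rpow (by norm_num; linarith : x+1-1 ≠ 0)]
  rcases eq_or_lt_of_le ht.2 with h1 | h1
  · rw [h1]
    simp [Real.zero_rpow (by linarith : y - 1 ≠ 0)]
  have h1t : (0:ℝ) < 1 - t := by linarith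
  have hfac : (0:ℝ) ≤ t ^ x * (1 - t) ^ (y-2) := by positivity
  have hlog : Real.log t ≤ t - 1 := Real.log_le_sub_one_of_pos h0
  have e2 : (1-t) ^ (y-1) = (1-t) ^ (y-2) * (1-t) := by
    rw [show y - 1 = y - 2 + 1 by ring, Real.rpow_add_one h1t.ne' (y-2)]
  have e3 : t ^ (x+1-1) = t ^ x := by norm_num
  have key := mul_le_mul_of_nonneg_left hlog hfac
  simp only [Pi.neg_apply]
  rw [e3, e2]
  nlinarith [key]

theorem stmt2 (a b y : ℝ) (ha : 0 < a) (hab : a < b) (hy : 1 < y) :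
    (a / b) ^ y ≤ B b y / B a y ∧
      B b y / B a y ≤ ((b + y) / (a + y)) ^ (1 - y) * (a / b) := by
  have hb : 0 < b := lt_trans ha hab
  have hy0 : (0:ℝ) < y := by linarith
  set I : ℝ → ℝ := fun s => ∫ t in (0:ℝ)..1, Real.log t * (t ^ (s-1) * (1 - t) ^ (y-1))
    with hI
  set J : ℝ → ℝ := fun s => ∫ t in (0:ℝ)..1, t ^ s * (1 - t) ^ (y-2) * Real.log t with hJ
  -- derivative sign facts
  have key_low : ∀ s, 0 < s → 0 ≤ y * B s y + s * I s := by
    intro s hs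
    have hstar := star_identity hs hy
    have hJge := J_ge hs hy
    have hB : B s y = ∫ t in (0:ℝ)..1, t ^ (s-1) * (1 - t) ^ (y-1) := rfl
    have h2 : -((y-1) * B s y) ≤ (y-1) * J s :=
      by nlinarith [mul_le_mul_of_nonneg_left hJge (by linarith : (0:ℝ) ≤ y - 1)]
    have : s * I s = (y-1) * J s - B s y := by
      rw [hI, hJ]; dsimp only; linarith [hstar, hB]
    nlinarith [h2]
  have key_up : ∀ s, 0 < s → (s+y) * B s y + s * (y-1) * B s y + s * (s+y) * I s ≤ 0 := by
    intro s hs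
    have hstar := star_identity hs hy
    have hJle := J_le hs hy
    have hrec := recurrence hs hy0
    have hB : B s y = ∫ t in (0:ℝ)..1, t ^ (s-1) * (1 - t) ^ (y-1) := rfl
    have hBB : s * B s y = (s+y) * B (s+1) y := by
      rw [B, B]
      rw [hrec]
      congr 1
      apply intervalIntegral.integral_congr
      intro t _
      norm_num
    have hsI : s * I s = (y-1) * J s - B s y := by
      rw [hI, hJ]; dsimp only; linarith [hstar, hB]
    have h3 : (s+y) * J s ≤ -(s * B s y) := by
      have := mul_le_mul_of_nonneg_left hJle (by linarith : (0:ℝ) ≤ s + y)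
      rw [hBB]
      nlinarith [this]
    nlinarith [mul_le_mul_of_nonneg_left h3 (by linarith : (0:ℝ) ≤ y - 1), hsI]
  -- monotone F
  have hBderiv : ∀ s, 0 < s → HasDerivAt (fun u => B u y) (I s) s := fun s hs =>
    hasDerivAt_B hs hy
  have hFd : ∀ s, 0 < s → HasDerivAt (fun s => y * Real.log s + Real.log (B s y))
      (y * s⁻¹ + I s / B s y) s := by
    intro s hs
    exact ((Real.hasDerivAt_log hs.ne').const_mul y).add
      ((hBderiv s hs).log (B_pos hs hy).ne')
  have hGd : ∀ s, 0 < s → HasDerivAt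
      (fun s => Real.log s + (y-1) * Real.log (s+y) + Real.log (B s y))
      (s⁻¹ + (y-1) * (1 / (s+y)) + I s / B s y) s := by
    intro s hs
    have hsy : s + y ≠ 0 := by positivity
    have h2 : HasDerivAt (fun s : ℝ => Real.log (s+y)) (1 / (s+y)) s :=
      HasDerivAt.log ((hasDerivAt_id s).add_const y) hsy
    exact ((Real.hasDerivAt_log hs.ne').add (h2.const_mul (y-1))).add
      ((hBderiv s hs).log (B_pos hs hy).ne')
  have hF : MonotoneOn (fun s => y * Real.log s + Real.log (B s y)) (Ioi (0:ℝ)) := by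
    apply monotoneOn_of_hasDerivWithinAt_nonneg (f' := fun s => y * s⁻¹ + I s / B s y)
      (convex_Ioi 0)
    · exact fun s hs => (hFd s hs).continuousAt.continuousWithinAt
    · intro s hs
      rw [interior_Ioi] at hs
      exact (hFd s hs).hasDerivWithinAt
    · intro s hs
      rw [interior_Ioi] at hs
      have hBp := B_pos hs hy
      have hs' : (0:ℝ) < s := hs
      have h := key_low s hs
      have he : y * s⁻¹ + I s / B s y = (y * B s y + s * I s) / (s * B s y) := by
        field_simp
      rw [he]
      positivity
  have hG : AntitoneOn (fun s => Real.log s + (y-1) * Real.log (s+y) + Real.log (B s y))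
      (Ioi (0:ℝ)) := by
    apply antitoneOn_of_hasDerivWithinAt_nonpos
      (f' := fun s => s⁻¹ + (y-1) * (1 / (s+y)) + I s / B s y) (convex_Ioi 0)
    · exact fun s hs => (hGd s hs).continuousAt.continuousWithinAt
    · intro s hs
      rw [interior_Ioi] at hs
      exact (hGd s hs).hasDerivWithinAt
    · intro s hs
      rw [interior_Ioi] at hs
      have hBp := B_pos hs hy
      have hs' : (0:ℝ) < s := hs
      have h := key_up s hs
      have he : s⁻¹ + (y-1) * (1 / (s+y)) + I s / B s y
          = ((s+y) * B s y + s * (y-1) * B s y + s * (s+y) * I s) / (s * (s+y) * B s y) := by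
        field_simp
      rw [he]
      apply div_nonpos_of_nonpos_of_nonneg h
      positivity
  -- apply at a b
  have hamem : a ∈ Ioi (0:ℝ) := ha
  have hbmem : b ∈ Ioi (0:ℝ) := hb
  have hFab := hF hamem hbmem hab.le
  have hGab := hG hamem hbmem hab.le
  have hBa := B_pos ha hy
  have hBb := B_pos hb hy
  dsimp only at hFab hGab
  constructor
  · rw [← Real.log_le_log_iff (by positivity) (by positivity)]
    rw [Real.log_rpow (by positivity), Real.log_div hBb.ne' hBa.ne',
      Real.log_div ha.ne' hb.ne', mul_sub]
    linarith [hFab]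
  · rw [← Real.log_le_log_iff (by positivity) (by positivity)]
    rw [Real.log_div hBb.ne' hBa.ne',
      Real.log_mul (by positivity) (by positivity),
      Real.log_rpow (by positivity), Real.log_div (by positivity) (by positivity),
      Real.log_div ha.ne' hb.ne']
    nlinarith [hGab]
end

section
/- Let 0 < a < b and y > 1. Then (a/b) · (b^b (a+y)^(a+y) / (a^a (b+y)^(b+y)))^(1 - 1/y) ≤ B(b,y)/B(a,y). -/
open Real MeasureTheory intervalIntegral

private lemma key7 {u y : ℝ} (hu : 0 < u) (hy : 1 < y) :
    1/(u+1) - 1/(u+y) ≤ (1 - 1/y) * ((log (u+y) - log u) - (log (u+y+1) - log (u+1))) := by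
  have hy0 : 0 < y := by linarith
  have h1 : 0 < u + 1 := by linarith
  have h2 : 0 < u + y := by linarith
  have h3 : 0 < u + y + 1 := by linarith
  set A := u * (u + y + 1) with hA
  have hApos : 0 < A := by positivity
  have hABy : (u+1) * (u+y) = A + y := by rw [hA]; ring
  have hlog : (log (u+y) - log u) - (log (u+y+1) - log (u+1))
      = log (A + y) - log A := by
    rw [← hABy, hA, Real.log_mul (by positivity) (by positivity),
      Real.log_mul (by positivity) (by positivity)]
    ring
  have hest : Real.log (A / (A + y)) ≤ A / (A + y) - 1 :=
    Real.log_le_sub_one_of_pos (by positivity)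
  have hql : Real.log (A / (A + y)) = log A - log (A + y) :=
    Real.log_div (ne_of_gt hApos) (by positivity)
  have hstep : y / (A + y) ≤ log (A + y) - log A := by
    rw [hql] at hest
    have e : A / (A + y) - 1 = - (y / (A + y)) := by field_simp; ring
    linarith [hest, e]
  have hLHS : 1/(u+1) - 1/(u+y) = (y - 1) / (A + y) := by
    rw [← hABy]; field_simp; ring
  have hfac : 0 ≤ 1 - 1/y := by
    have : 1/y < 1 := by rw [div_lt_one hy0]; linarith
    linarith
  calc 1/(u+1) - 1/(u+y) = (1 - 1/y) * (y / (A + y)) := by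
        rw [hLHS]; field_simp
    _ ≤ (1 - 1/y) * (log (A + y) - log A) := by
        exact mul_le_mul_of_nonneg_left hstep hfac
    _ = _ := by rw [hlog]

private lemma sum_bound7 {x y : ℝ} (hx : 0 < x) (hy : 1 < y) (n : ℕ) :
    ∑ k ∈ Finset.range (n+1), (1/(x+k) - 1/(x+y+k))
      ≤ 1/x - 1/(x+y+n) + (1-1/y) * ((log (x+y) - log x) - (log (x+y+n) - log (x+n))) := by
  induction n with
  | zero => simp
  | succ n ih =>
    rw [Finset.sum_range_succ]
    have hk := key7 (u := x + n) (by positivity) hy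
    have c1 : ((n+1 : ℕ) : ℝ) = (n : ℝ) + 1 := by push_cast; ring
    rw [c1]
    have e1 : x + ((n:ℝ)+1) = (x + n) + 1 := by ring
    have e2 : x + y + ((n:ℝ)+1) = (x + n) + y + 1 := by ring
    have e3 : x + y + (n:ℝ) = (x + n) + y := by ring
    rw [e1, e2]
    rw [e3] at ih
    linarith [hk]

private lemma sum_bound7' {x y : ℝ} (hx : 0 < x) (hy : 1 < y) (n : ℕ) :
    ∑ k ∈ Finset.range (n+1), (1/(x+k) - 1/(x+y+k))
      ≤ 1/x + (1-1/y) * (log (x+y) - log x) := by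
  have h := sum_bound7 hx hy n
  have h1 : 0 < 1/(x+y+n) := by positivity
  have h2 : log (x+n) ≤ log (x+y+n) :=
    Real.log_le_log (by positivity) (by linarith)
  have hfac : 0 ≤ 1 - 1/y := by
    have : 1/y < 1 := by rw [div_lt_one (by linarith)]; linarith
    linarith
  nlinarith [mul_nonneg hfac (sub_nonneg.mpr h2)]

private lemma not_mem_uIcc7 {a b c : ℝ} (ha : 0 < a + c) (hab : a ≤ b) :
    (0:ℝ) ∉ Set.uIcc (a+c) (b+c) := by
  rw [Set.uIcc_of_le (by linarith)]
  rintro ⟨h1, h2⟩; linarith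

private lemma int_shift_one_div7 {a b c : ℝ} (ha : 0 < a + c) (hab : a ≤ b) :
    ∫ x in a..b, 1/(x+c) = log (b+c) - log (a+c) := by
  rw [intervalIntegral.integral_comp_add_right (fun x => 1/x) c,
    integral_one_div (not_mem_uIcc7 ha hab), Real.log_div (by linarith) (ne_of_gt ha)]

private lemma int_shift_log7 {a b c : ℝ} (ha : 0 < a + c) (hab : a ≤ b) :
    ∫ x in a..b, log (x+c) = (b+c) * log (b+c) - (a+c) * log (a+c) - (b+c) + (a+c) := by
  rw [intervalIntegral.integral_comp_add_right (fun x => log x) c,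
    integral_log]

private lemma cont_one_div7 {a b c : ℝ} (ha : 0 < a + c) (hab : a ≤ b) :
    ContinuousOn (fun x : ℝ => 1/(x+c)) (Set.uIcc a b) := by
  apply ContinuousOn.div continuousOn_const (by fun_prop)
  intro x hx
  rw [Set.uIcc_of_le hab] at hx
  have := hx.1
  intro h; nlinarith [hx.1]

private lemma cont_log_shift7 {a b c : ℝ} (ha : 0 < a + c) (hab : a ≤ b) :
    ContinuousOn (fun x : ℝ => log (x+c)) (Set.uIcc a b) := by
  apply ContinuousOn.log (by fun_prop)
  intro x hx
  rw [Set.uIcc_of_le hab] at hx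
  have := hx.1
  intro h; nlinarith [hx.1]

private lemma int_comparison7 {a b y : ℝ} (ha : 0 < a) (hab : a ≤ b) (hy : 1 < y) (n : ℕ) :
    ∑ k ∈ Finset.range (n+1),
        ((log (b+(k:ℝ)) - log (a+(k:ℝ))) - (log (b+(y+(k:ℝ))) - log (a+(y+(k:ℝ)))))
      ≤ (log b - log a)
        + (1-1/y) * ((b+y)*log (b+y) - (a+y)*log (a+y) - b*log b + a*log a) := by
  have hy0 : 0 < y := by linarith
  have hcont1 : ∀ c : ℝ, 0 ≤ c → ContinuousOn (fun x : ℝ => 1/(x+c)) (Set.uIcc a b) :=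
    fun c hc => cont_one_div7 (by linarith) hab
  have hterm : ∀ k : ℕ, IntervalIntegrable
      (fun x : ℝ => 1/(x+(k:ℝ)) - 1/(x+(y+(k:ℝ)))) volume a b := by
    intro k
    exact ((hcont1 k (Nat.cast_nonneg k)).sub
      (hcont1 (y+(k:ℝ)) (by positivity))).intervalIntegrable
  have e1 : ∀ k : ℕ, (∫ x in a..b, (1/(x+(k:ℝ)) - 1/(x+(y+(k:ℝ)))))
      = (log (b+(k:ℝ)) - log (a+(k:ℝ))) - (log (b+(y+(k:ℝ))) - log (a+(y+(k:ℝ)))) := by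
    intro k
    rw [intervalIntegral.integral_sub
        ((hcont1 k (Nat.cast_nonneg k)).intervalIntegrable)
        ((hcont1 (y+(k:ℝ)) (by positivity)).intervalIntegrable),
      int_shift_one_div7 (by positivity) hab, int_shift_one_div7 (by positivity) hab]
  have hvcont : ContinuousOn
      (fun x : ℝ => ∑ k ∈ Finset.range (n+1), (1/(x+(k:ℝ)) - 1/(x+(y+(k:ℝ)))))
      (Set.uIcc a b) := by
    apply continuousOn_finset_sum
    intro k _
    exact (hcont1 k (Nat.cast_nonneg k)).sub (hcont1 (y+(k:ℝ)) (by positivity))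
  have hwcont : ContinuousOn
      (fun x : ℝ => 1/x + (1-1/y) * (log (x+y) - log x)) (Set.uIcc a b) := by
    have h0 : ContinuousOn (fun x : ℝ => 1/(x+(0:ℝ))) (Set.uIcc a b) := hcont1 0 le_rfl
    simp only [add_zero] at h0
    apply h0.add
    apply ContinuousOn.mul continuousOn_const
    have hl0 := cont_log_shift7 (a := a) (b := b) (c := 0) (by linarith) hab
    simp only [add_zero] at hl0
    exact (cont_log_shift7 (c := y) (by linarith) hab).sub hl0
  calc ∑ k ∈ Finset.range (n+1),
        ((log (b+(k:ℝ)) - log (a+(k:ℝ))) - (log (b+(y+(k:ℝ))) - log (a+(y+(k:ℝ)))))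
      = ∫ x in a..b, ∑ k ∈ Finset.range (n+1), (1/(x+(k:ℝ)) - 1/(x+(y+(k:ℝ)))) := by
        rw [intervalIntegral.integral_finset_sum (fun k _ => hterm k)]
        exact (Finset.sum_congr rfl fun k _ => (e1 k).symm)
    _ ≤ ∫ x in a..b, (1/x + (1-1/y) * (log (x+y) - log x)) := by
        apply intervalIntegral.integral_mono_on hab
          (hvcont.intervalIntegrable) (hwcont.intervalIntegrable)
        intro x hx
        have hx0 : 0 < x := lt_of_lt_of_le ha hx.1
        have h := sum_bound7' hx0 hy n
        simp only [← add_assoc]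
        exact h
    _ = (log b - log a)
        + (1-1/y) * ((b+y)*log (b+y) - (a+y)*log (a+y) - b*log b + a*log a) := by
        have hint1 : IntervalIntegrable (fun x : ℝ => 1/x) volume a b := by
          have := hcont1 0 le_rfl; simp only [add_zero] at this
          exact this.intervalIntegrable
        have hl0 : ContinuousOn (fun x : ℝ => log x) (Set.uIcc a b) := by
          have := cont_log_shift7 (a := a) (b := b) (c := 0) (by linarith) hab
          simpa using this
        have hly : ContinuousOn (fun x : ℝ => log (x + y)) (Set.uIcc a b) :=
          cont_log_shift7 (by linarith) hab
        have hinty : IntervalIntegrable (fun x : ℝ => log (x + y)) volume a b :=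
          hly.intervalIntegrable
        have hint0 : IntervalIntegrable (fun x : ℝ => log x) volume a b :=
          hl0.intervalIntegrable
        have hint2 : IntervalIntegrable
            (fun x : ℝ => (1-1/y) * (log (x+y) - log x)) volume a b :=
          (continuousOn_const.mul (hly.sub hl0)).intervalIntegrable
        rw [intervalIntegral.integral_add hint1 hint2,
          intervalIntegral.integral_const_mul,
          intervalIntegral.integral_sub hinty hint0]
        have i1 : ∫ x in a..b, 1/x = log b - log a := by
          have := int_shift_one_div7 (a := a) (b := b) (c := 0) (by linarith) hab
          simpa using this
        have i2 := int_shift_log7 (a := a) (b := b) (c := y) (by linarith) hab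
        have i3 : ∫ x in a..b, log x = b * log b - a * log a - b + a := by
          have := int_shift_log7 (a := a) (b := b) (c := 0) (by linarith) hab
          simpa using this
        rw [i1, i2, i3]; ring

private lemma gammaSeq_ratio7 {a b y : ℝ} (ha : 0 < a) (hb : 0 < b) (hy : 0 < y)
    {n : ℕ} (hn : 0 < n) :
    (Real.GammaSeq b n * Real.GammaSeq (a+y) n) / (Real.GammaSeq a n * Real.GammaSeq (b+y) n)
      = ∏ k ∈ Finset.range (n+1), (((a+k) * (b+y+k)) / ((b+k) * (a+y+k))) := by
  have hN : (0:ℝ) < (n:ℝ) := by exact_mod_cast hn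
  have hP : ∀ s : ℝ, 0 < s → (0:ℝ) < ∏ j ∈ Finset.range (n+1), (s + j) := by
    intro s hs
    exact Finset.prod_pos fun j _ => by positivity
  have hpow : (n:ℝ) ^ b * (n:ℝ) ^ (a+y) = (n:ℝ) ^ a * (n:ℝ) ^ (b+y) := by
    rw [← Real.rpow_add hN, ← Real.rpow_add hN]; ring_nf
  have hfact : (0:ℝ) < (n.factorial : ℝ) := by exact_mod_cast n.factorial_pos
  have hrw : ∏ k ∈ Finset.range (n+1), (((a+k) * (b+y+k)) / ((b+k) * (a+y+k)))
      = ((∏ j ∈ Finset.range (n+1), (a+j)) * (∏ j ∈ Finset.range (n+1), (b+y+j)))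
        / ((∏ j ∈ Finset.range (n+1), (b+j)) * (∏ j ∈ Finset.range (n+1), (a+y+j))) := by
    rw [Finset.prod_div_distrib, Finset.prod_mul_distrib, Finset.prod_mul_distrib]
  rw [hrw]
  simp only [Real.GammaSeq]
  rw [div_eq_div_iff]
  · field_simp
    linear_combination hpow
  · have h1 := hP a ha
    have h2 := hP (b+y) (by linarith)
    have p1 : (0:ℝ) < (n:ℝ) ^ a := Real.rpow_pos_of_pos hN a
    have p2 : (0:ℝ) < (n:ℝ) ^ (b+y) := Real.rpow_pos_of_pos hN (b+y)
    positivity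
  · have h1 := hP b hb
    have h2 := hP (a+y) (by linarith)
    positivity

private lemma B_eq7 {x y : ℝ} (hx : 0 < x) (hy : 0 < y) :
    B x y = Real.Gamma x * Real.Gamma y / Real.Gamma (x+y) := by
  have hG : 0 < Real.Gamma (x+y) := Real.Gamma_pos_of_pos (by linarith)
  have h1 : Complex.betaIntegral x y = ((B x y : ℝ) : ℂ) := by
    rw [B, ← intervalIntegral.integral_ofReal, Complex.betaIntegral]
    apply intervalIntegral.integral_congr
    intro t ht
    rw [Set.uIcc_of_le zero_le_one] at ht
    obtain ⟨h0, h1'⟩ := ht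
    push_cast
    rw [Complex.ofReal_cpow h0, Complex.ofReal_cpow (by linarith)]
    push_cast
    ring
  have h2 := Complex.Gamma_mul_Gamma_eq_betaIntegral
    (s := (x:ℂ)) (t := (y:ℂ)) (by simpa using hx) (by simpa using hy)
  rw [h1] at h2
  have h3 : ((Real.Gamma x * Real.Gamma y : ℝ) : ℂ)
      = ((Real.Gamma (x+y) * B x y : ℝ) : ℂ) := by
    push_cast
    rw [← Complex.Gamma_ofReal, ← Complex.Gamma_ofReal, ← Complex.Gamma_ofReal]
    push_cast at h2 ⊢
    rw [h2]
  have h4 := Complex.ofReal_injective h3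
  field_simp
  linarith [h4]

theorem stmt7 (a b y : ℝ) (ha : 0 < a) (hab : a < b) (hy : 1 < y) :
    (a / b) * (b ^ b * (a + y) ^ (a + y) / (a ^ a * (b + y) ^ (b + y))) ^ (1 - 1 / y) ≤
      B b y / B a y := by
  have hb : 0 < b := lt_trans ha hab
  have hy0 : 0 < y := by linarith
  have hay : 0 < a + y := by linarith
  have hby : 0 < b + y := by linarith
  set m : ℝ := (a / b) * (b ^ b * (a + y) ^ (a + y) / (a ^ a * (b + y) ^ (b + y))) ^ (1 - 1 / y)
    with hm_def
  have hK : 0 < b ^ b * (a + y) ^ (a + y) / (a ^ a * (b + y) ^ (b + y)) := by positivity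
  have hmpos : 0 < m := by
    rw [hm_def]; positivity
  -- log of m
  have hlogm : log m = (log a - log b) + (1 - 1/y) *
      (b * log b + (a+y) * log (a+y) - a * log a - (b+y) * log (b+y)) := by
    rw [hm_def, Real.log_mul (by positivity) (by positivity),
      Real.log_div (ne_of_gt ha) (ne_of_gt hb), Real.log_rpow hK,
      Real.log_div (by positivity) (by positivity),
      Real.log_mul (by positivity) (by positivity),
      Real.log_mul (by positivity) (by positivity),
      Real.log_rpow hb, Real.log_rpow hay, Real.log_rpow ha, Real.log_rpow hby]
    ring
  -- step A : m ≤ partial products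
  have hstepA : ∀ n : ℕ, m ≤ ∏ k ∈ Finset.range (n+1), (((a+k) * (b+y+k)) / ((b+k) * (a+y+k))) := by
    intro n
    have hfac_pos : ∀ k : ℕ, (0:ℝ) < ((a+k) * (b+y+k)) / ((b+k) * (a+y+k)) := by
      intro k; positivity
    have hppos : 0 < ∏ k ∈ Finset.range (n+1), (((a+k) * (b+y+k)) / ((b+k) * (a+y+k))) :=
      Finset.prod_pos fun k _ => hfac_pos k
    have hlogp : log (∏ k ∈ Finset.range (n+1), (((a+k) * (b+y+k)) / ((b+k) * (a+y+k))))
        = ∑ k ∈ Finset.range (n+1),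
            (log (a+(k:ℝ)) + log (b+y+(k:ℝ)) - log (b+(k:ℝ)) - log (a+y+(k:ℝ))) := by
      rw [Real.log_prod (fun k _ => ne_of_gt (hfac_pos k))]
      apply Finset.sum_congr rfl
      intro k _
      rw [Real.log_div (by positivity) (by positivity),
        Real.log_mul (by positivity) (by positivity),
        Real.log_mul (by positivity) (by positivity)]
      ring
    have hsum := int_comparison7 ha (le_of_lt hab) hy n
    simp only [← add_assoc] at hsum
    have hsum2 : ∑ k ∈ Finset.range (n+1),
        ((log (b+(k:ℝ)) - log (a+(k:ℝ))) - (log (b+y+(k:ℝ)) - log (a+y+(k:ℝ))))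
        = - ∑ k ∈ Finset.range (n+1),
            (log (a+(k:ℝ)) + log (b+y+(k:ℝ)) - log (b+(k:ℝ)) - log (a+y+(k:ℝ))) := by
      rw [← Finset.sum_neg_distrib]
      exact Finset.sum_congr rfl fun k _ => by ring
    rw [hsum2] at hsum
    have hlogle : log m ≤ log (∏ k ∈ Finset.range (n+1),
        (((a+k) * (b+y+k)) / ((b+k) * (a+y+k)))) := by
      rw [hlogm, hlogp]
      linarith [hsum]
    calc m = Real.exp (log m) := (Real.exp_log hmpos).symm
      _ ≤ Real.exp (log (∏ k ∈ Finset.range (n+1), (((a+k) * (b+y+k)) / ((b+k) * (a+y+k))))) :=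
          Real.exp_le_exp.mpr hlogle
      _ = _ := Real.exp_log hppos
  -- step B : limit
  have hΓa : 0 < Real.Gamma a := Real.Gamma_pos_of_pos ha
  have hΓb : 0 < Real.Gamma b := Real.Gamma_pos_of_pos hb
  have hΓay : 0 < Real.Gamma (a+y) := Real.Gamma_pos_of_pos hay
  have hΓby : 0 < Real.Gamma (b+y) := Real.Gamma_pos_of_pos hby
  have htend : Filter.Tendsto
      (fun n : ℕ => (Real.GammaSeq b n * Real.GammaSeq (a+y) n)
        / (Real.GammaSeq a n * Real.GammaSeq (b+y) n))
      Filter.atTop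
      (nhds ((Real.Gamma b * Real.Gamma (a+y)) / (Real.Gamma a * Real.Gamma (b+y)))) := by
    apply Filter.Tendsto.div
      ((Real.GammaSeq_tendsto_Gamma b).mul (Real.GammaSeq_tendsto_Gamma (a+y)))
      ((Real.GammaSeq_tendsto_Gamma a).mul (Real.GammaSeq_tendsto_Gamma (b+y)))
    positivity
  have hfinal : m ≤ (Real.Gamma b * Real.Gamma (a+y)) / (Real.Gamma a * Real.Gamma (b+y)) := by
    apply ge_of_tendsto htend
    filter_upwards [Filter.eventually_ge_atTop 1] with n hn
    rw [gammaSeq_ratio7 ha hb hy0 (Nat.lt_of_lt_of_le Nat.zero_lt_one hn)]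
    exact hstepA n
  have hBb := B_eq7 hb hy0
  have hBa := B_eq7 ha hy0
  have hΓy : 0 < Real.Gamma y := Real.Gamma_pos_of_pos hy0
  have heq : B b y / B a y
      = (Real.Gamma b * Real.Gamma (a+y)) / (Real.Gamma a * Real.Gamma (b+y)) := by
    rw [hBb, hBa]
    field_simp
  rw [heq]
  exact hfinal
end

section
/- If 1 ≤ y ≤ 2 and 1 ≤ a < b ≤ 2, then B(b+1,y) ≥ B(a+1,y) + (1/(8·ln(3/2)))·(5/9)^(y-1)·((4/9)^(b-1) - (4/9)^(a-1)). -/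
open Real MeasureTheory intervalIntegral

namespace Stmt11Aux

lemma log32_pos : 0 < Real.log (3/2) := Real.log_pos (by norm_num)

lemma log49 : Real.log ((4:ℝ)/9) = -(2 * Real.log (3/2)) := by
  have h1 : ((4:ℝ)/9) = (((3:ℝ)/2) ^ (2:ℕ))⁻¹ := by norm_num
  rw [h1, Real.log_inv, Real.log_pow]
  push_cast; ring

lemma rpow49 (x : ℝ) : ((4:ℝ)/9) ^ (x-1) = ((((3:ℝ)/2) ^ (x-1)) ^ (2:ℕ))⁻¹ := by
  have h1 : ((4:ℝ)/9) = (((9:ℝ)/4))⁻¹ := by norm_num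
  rw [h1, Real.inv_rpow (by norm_num)]
  congr 1
  rw [show ((9:ℝ)/4) = ((3:ℝ)/2) ^ (2:ℕ) by norm_num, ← Real.rpow_natCast ((3:ℝ)/2) 2,
    ← Real.rpow_natCast (((3:ℝ)/2) ^ (x-1)) 2, ← Real.rpow_mul (by norm_num),
    ← Real.rpow_mul (by norm_num)]
  ring_nf

lemma conv_bound {x : ℝ} (h1 : 1 ≤ x) (h2 : x ≤ 2) :
    2 * (((3:ℝ)/2) ^ (x - 1)) ≤ x + 1 := by
  have hE : ((3:ℝ)/2) ^ (x-1) = Real.exp ((2-x) • (0:ℝ) + (x-1) • Real.log (3/2)) := by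
    rw [Real.rpow_def_of_pos (by norm_num)]
    simp [smul_eq_mul]
    ring_nf
  have hc := convexOn_exp.2 (Set.mem_univ (0:ℝ)) (Set.mem_univ (Real.log (3/2)))
      (by linarith : (0:ℝ) ≤ 2 - x) (by linarith : (0:ℝ) ≤ x - 1) (by ring)
  rw [← hE] at hc
  simp only [smul_eq_mul, Real.exp_zero, Real.exp_log (by norm_num : (0:ℝ) < 3/2)] at hc
  linarith

lemma ineqA {x : ℝ} (h1 : 1 ≤ x) (h2 : x ≤ 2) :
    1/(x+1)^2 ≤ (1/4) * ((4:ℝ)/9) ^ (x-1) := by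
  rw [rpow49]
  set E := ((3:ℝ)/2) ^ (x-1) with hE
  have hEpos : 0 < E := Real.rpow_pos_of_pos (by norm_num) _
  have hkey := conv_bound h1 h2
  rw [← sub_nonneg]
  have heq : (1/4) * (E ^ 2)⁻¹ - 1/(x+1)^2
      = ((x+1)^2 - 4*E^2) / (4 * E^2 * (x+1)^2) := by
    field_simp
  rw [heq]
  apply div_nonneg _ (by positivity)
  have hkey2 : 2 * E ≤ x + 1 := hkey
  nlinarith [mul_nonneg (sub_nonneg.2 hkey2) (by linarith : (0:ℝ) ≤ x+1+2*E)]

lemma ineqB {x : ℝ} (h1 : 1 ≤ x) (h2 : x ≤ 2) :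
    1/(x+1)^2 - 1/(x+2)^2 ≤ (5/36) * ((4:ℝ)/9) ^ (x-1) := by
  rw [rpow49]
  set E := ((3:ℝ)/2) ^ (x-1) with hE
  have hEpos : 0 < E := Real.rpow_pos_of_pos (by norm_num) _
  have hkey := conv_bound h1 h2
  rw [← sub_nonneg]
  have heq : (5/36) * (E ^ 2)⁻¹ - (1/(x+1)^2 - 1/(x+2)^2)
      = (5*(x+1)^2*(x+2)^2 - 36*E^2*(2*x+3)) / (36 * E^2 * (x+1)^2 * (x+2)^2) := by
    field_simp
    ring
  rw [heq]
  apply div_nonneg _ (by positivity)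
  have hkey2 : 2 * E ≤ x + 1 := hkey
  have h4 : 4 * E^2 ≤ (x+1)^2 := by
    nlinarith [mul_nonneg (sub_nonneg.2 hkey2) (by linarith : (0:ℝ) ≤ x+1+2*E)]
  nlinarith [mul_le_mul_of_nonneg_right h4 (by linarith : (0:ℝ) ≤ 2*x+3),
    mul_nonneg (mul_nonneg (by linarith : (0:ℝ) ≤ x-1) (by linarith : (0:ℝ) ≤ 5*x+7)) (sq_nonneg (x+1))]

noncomputable def cc : ℝ := 1/(8 * Real.log (3/2))

lemma cc_pos : 0 < cc := by
  have := log32_pos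
  unfold cc; positivity

lemma hasDeriv_q (x : ℝ) :
    HasDerivAt (fun x : ℝ => ((4:ℝ)/9) ^ (x-1)) (((4:ℝ)/9) ^ (x-1) * Real.log ((4:ℝ)/9)) x := by
  have h := (Real.hasStrictDerivAt_const_rpow (show (0:ℝ) < 4/9 by norm_num) (x-1)).hasDerivAt
  have h2 : HasDerivAt (fun x : ℝ => x - 1) 1 x := (hasDerivAt_id x).sub_const 1
  have h3 := h.comp x h2
  rw [mul_one] at h3
  exact h3

lemma hasDeriv_inv_shift (d x : ℝ) (hx : x + d ≠ 0) :
    HasDerivAt (fun x : ℝ => (x + d)⁻¹) (-(((x + d)^2)⁻¹)) x := by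
  have : HasDerivAt (fun x : ℝ => (x + d)⁻¹) (-1 / (x + d)^2) x := ((hasDerivAt_id x).add_const d).inv hx
  convert this using 1
  ring

lemma diffq : Differentiable ℝ (fun x : ℝ => ((4:ℝ)/9) ^ (x-1)) :=
  fun x => (hasDeriv_q x).differentiableAt

lemma hasDerivU (x : ℝ) (hx : x + 1 ≠ 0) :
    HasDerivAt (fun x : ℝ => (x+1)⁻¹ - cc * ((4:ℝ)/9) ^ (x-1))
      (-(((x + 1)^2)⁻¹) - cc * (((4:ℝ)/9) ^ (x-1) * Real.log ((4:ℝ)/9))) x :=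
  (hasDeriv_inv_shift 1 x hx).sub ((hasDeriv_q x).const_mul cc)

lemma cc_log : cc * Real.log ((4:ℝ)/9) = -(1/4) := by
  have hL := log32_pos
  rw [log49]; unfold cc
  field_simp
  ring

lemma monoU : MonotoneOn (fun x : ℝ => (x+1)⁻¹ - cc * ((4:ℝ)/9) ^ (x-1)) (Set.Icc 1 2) := by
  apply monotoneOn_of_deriv_nonneg (convex_Icc 1 2)
  · apply ContinuousOn.sub
    · exact ContinuousOn.inv₀ (by fun_prop) (fun x hx => by simp at hx; nlinarith [hx.1])
    · exact (continuous_const.mul diffq.continuous).continuousOn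
  · intro x hx
    rw [interior_Icc] at hx
    exact (hasDerivU x (by nlinarith [hx.1])).differentiableAt.differentiableWithinAt
  · intro x hx
    rw [interior_Icc] at hx
    obtain ⟨h1, h2⟩ := hx
    rw [(hasDerivU x (by nlinarith)).deriv]
    have hA := ineqA h1.le h2.le
    have : cc * (((4:ℝ)/9) ^ (x-1) * Real.log ((4:ℝ)/9)) = -(1/4) * ((4:ℝ)/9) ^ (x-1) := by
      rw [← mul_assoc, mul_comm cc, mul_assoc, cc_log]; ring
    rw [this]
    have h1d : 1/(x+1)^2 = ((x+1)^2)⁻¹ := one_div _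
    linarith [hA, h1d ▸ hA]

lemma hasDerivV (x : ℝ) (hx1 : x + 1 ≠ 0) (hx2 : x + 2 ≠ 0) :
    HasDerivAt (fun x : ℝ => (x+1)⁻¹ - (x+2)⁻¹ - (5/9) * cc * ((4:ℝ)/9) ^ (x-1))
      (-(((x + 1)^2)⁻¹) - (-(((x + 2)^2)⁻¹)) - (5/9) * cc * (((4:ℝ)/9) ^ (x-1) * Real.log ((4:ℝ)/9))) x :=
  ((hasDeriv_inv_shift 1 x hx1).sub (hasDeriv_inv_shift 2 x hx2)).sub
    ((hasDeriv_q x).const_mul ((5/9) * cc))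

lemma monoV : MonotoneOn
    (fun x : ℝ => (x+1)⁻¹ - (x+2)⁻¹ - (5/9) * cc * ((4:ℝ)/9) ^ (x-1)) (Set.Icc 1 2) := by
  apply monotoneOn_of_deriv_nonneg (convex_Icc 1 2)
  · apply ContinuousOn.sub
    · apply ContinuousOn.sub
      · exact ContinuousOn.inv₀ (by fun_prop) (fun x hx => by simp at hx; nlinarith [hx.1])
      · exact ContinuousOn.inv₀ (by fun_prop) (fun x hx => by simp at hx; nlinarith [hx.1])
    · exact (continuous_const.mul diffq.continuous).continuousOn
  · intro x hx
    rw [interior_Icc] at hx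
    exact (hasDerivV x (by nlinarith [hx.1]) (by nlinarith [hx.1])).differentiableAt.differentiableWithinAt
  · intro x hx
    rw [interior_Icc] at hx
    obtain ⟨h1, h2⟩ := hx
    rw [(hasDerivV x (by nlinarith) (by nlinarith)).deriv]
    have hB := ineqB h1.le h2.le
    have : (5/9) * cc * (((4:ℝ)/9) ^ (x-1) * Real.log ((4:ℝ)/9)) = -(5/36) * ((4:ℝ)/9) ^ (x-1) := by
      rw [mul_assoc, ← mul_assoc cc, mul_comm cc, mul_assoc, cc_log]; ring
    rw [this]
    have e1 : 1/(x+1)^2 = ((x+1)^2)⁻¹ := one_div _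
    have e2 : 1/(x+2)^2 = ((x+2)^2)⁻¹ := one_div _
    rw [e1, e2] at hB
    linarith

lemma contpow {p : ℝ} (hp : 0 ≤ p) : Continuous fun t : ℝ => t ^ p :=
  Real.continuous_rpow_const hp

lemma contpow1 {p : ℝ} (hp : 0 ≤ p) : Continuous fun t : ℝ => (1 - t) ^ p :=
  (Real.continuous_rpow_const hp).comp (continuous_const.sub continuous_id)

lemma int_pow {p : ℝ} (hp : 0 < p) : ∫ t in (0:ℝ)..1, t ^ p = 1/(p+1) := by
  rw [integral_rpow (Or.inl (by linarith))]
  rw [Real.one_rpow, Real.zero_rpow (by linarith : p + 1 ≠ 0)]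
  norm_num

lemma int_pow_mul {p : ℝ} (hp : 0 < p) :
    ∫ t in (0:ℝ)..1, t ^ p * (1 - t) = 1/(p+1) - 1/(p+2) := by
  have heq : Set.EqOn (fun t : ℝ => t ^ p * (1 - t)) (fun t : ℝ => t ^ p - t ^ (p+1))
      (Set.uIcc 0 1) := by
    intro t _
    rcases eq_or_ne t 0 with rfl | h
    · simp [Real.zero_rpow hp.ne', Real.zero_rpow (by linarith : p + 1 ≠ 0)]
    · simp only [Real.rpow_add_one h]
      ring
  rw [intervalIntegral.integral_congr heq,
    intervalIntegral.integral_sub ((contpow hp.le).intervalIntegrable _ _)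
      ((contpow (by linarith : (0:ℝ) ≤ p + 1)).intervalIntegrable _ _),
    int_pow hp, int_pow (by linarith : (0:ℝ) < p + 1)]
  ring_nf

end Stmt11Aux
open Stmt11Aux in
theorem stmt11 (a b y : ℝ) (hy1 : 1 ≤ y) (hy2 : y ≤ 2) (ha : 1 ≤ a) (hab : a < b) (hb : b ≤ 2) :
    B (b + 1) y ≥
      B (a + 1) y +
        (1 / (8 * Real.log (3 / 2))) * ((5 : ℝ) / 9) ^ (y - 1) *
          (((4 : ℝ) / 9) ^ (b - 1) - ((4 : ℝ) / 9) ^ (a - 1)) := by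
  have hccdef : (1 : ℝ) / (8 * Real.log (3 / 2)) = cc := rfl
  rw [hccdef]
  have ha0 : (0:ℝ) < a := by linarith
  have hb0 : (0:ℝ) < b := by linarith
  have ha2 : a ≤ 2 := by linarith
  have hb1 : 1 ≤ b := by linarith
  have hBdef : ∀ z y' : ℝ, B (z + 1) y' = ∫ t in (0:ℝ)..1, t ^ z * (1 - t) ^ (y' - 1) := by
    intro z y'; simp [B]
  have hU := monoU (Set.mem_Icc.2 ⟨ha, ha2⟩) (Set.mem_Icc.2 ⟨hb1, hb⟩) hab.le
  have hV := monoV (Set.mem_Icc.2 ⟨ha, ha2⟩) (Set.mem_Icc.2 ⟨hb1, hb⟩) hab.le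
  simp only at hU hV
  set qa := ((4:ℝ)/9) ^ (a-1) with hqa
  set qb := ((4:ℝ)/9) ^ (b-1) with hqb
  set R0 := cc * (qa - qb) with hR0
  have hqab : qb < qa := by
    rw [hqa, hqb]
    exact Real.rpow_lt_rpow_of_exponent_gt (by norm_num) (by norm_num) (by linarith)
  have hR0pos : 0 < R0 := mul_pos cc_pos (by linarith)
  have hV1le : 1/(a+1) - 1/(b+1) ≤ R0 := by
    have hexp : R0 = cc * qa - cc * qb := by rw [hR0]; ring
    rw [one_div, one_div]
    linarith
  have hV2le : (1/(a+1) - 1/(a+2)) - (1/(b+1) - 1/(b+2)) ≤ (5/9) * R0 := by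
    have hexp : (5/9) * R0 = 5/9 * cc * qa - 5/9 * cc * qb := by rw [hR0]; ring
    rw [one_div, one_div, one_div, one_div]
    linarith
  rcases eq_or_lt_of_le hy1 with hy | hy
  · -- y = 1
    rw [← hy]
    have e1 : ∀ z : ℝ, 0 < z → B (z+1) 1 = 1/(z+1) := by
      intro z hz
      rw [hBdef]
      simp only [sub_self, Real.rpow_zero, mul_one]
      exact int_pow hz
    rw [e1 a ha0, e1 b hb0]
    simp only [sub_self, Real.rpow_zero, mul_one]
    have hcexp : cc * (qb - qa) = -R0 := by rw [hR0]; ring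
    rw [ge_iff_le]
    linarith
  · -- 1 < y
    have hs0 : (0:ℝ) < y - 1 := by linarith
    have h2y : (0:ℝ) ≤ 2 - y := by linarith
    set V1 := 1/(a+1) - 1/(b+1) with hV1def
    set V2 := (1/(a+1) - 1/(a+2)) - (1/(b+1) - 1/(b+2)) with hV2def
    have hV1pos : 0 < V1 := by
      rw [hV1def]
      have : 1/(b+1) < 1/(a+1) := one_div_lt_one_div_of_lt (by linarith) (by linarith)
      linarith
    have hV2pos : 0 < V2 := by
      rw [hV2def]
      have heq : (1/(a+1) - 1/(a+2)) - (1/(b+1) - 1/(b+2))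
          = ((b-a)*(a+b+3)) / ((a+1)*(a+2)*((b+1)*(b+2))) := by
        field_simp
        ring
      rw [heq]
      apply div_pos (by nlinarith)
      apply mul_pos (mul_pos (by linarith) (by linarith)) (mul_pos (by linarith) (by linarith))
    have hV1ne : V1 ≠ 0 := hV1pos.ne'
    have hV2ne : V2 ≠ 0 := hV2pos.ne'
    have hca : Continuous fun t : ℝ => t ^ a := contpow ha0.le
    have hcb : Continuous fun t : ℝ => t ^ b := contpow hb0.le
    have hcf : Continuous fun t : ℝ => t ^ a - t ^ b := hca.sub hcb
    have hcg : Continuous fun t : ℝ => (1-t) ^ (y-1) := contpow1 (by linarith)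
    have hcs : Continuous fun t : ℝ => 1 - t := continuous_const.sub continuous_id
    have hI1 : ∫ t in (0:ℝ)..1, (t ^ a - t ^ b) = V1 := by
      rw [intervalIntegral.integral_sub (hca.intervalIntegrable _ _)
        (hcb.intervalIntegrable _ _), int_pow ha0, int_pow hb0, hV1def]
    have hI2 : ∫ t in (0:ℝ)..1, (t ^ a - t ^ b) * (1 - t) = V2 := by
      have hfe : (fun t : ℝ => (t ^ a - t ^ b) * (1 - t))
          = fun t : ℝ => t ^ a * (1-t) - t ^ b * (1-t) := by funext t; ring
      rw [hfe, intervalIntegral.integral_sub ((show Continuous fun t : ℝ => t ^ a * (1-t) from hca.mul hcs).intervalIntegrable _ _)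
        ((show Continuous fun t : ℝ => t ^ b * (1-t) from hcb.mul hcs).intervalIntegrable _ _), int_pow_mul ha0, int_pow_mul hb0, hV2def]
    set K := V1 ^ (2-y) * V2 ^ (y-1) with hK
    have hKpos : 0 < K :=
      mul_pos (Real.rpow_pos_of_pos hV1pos _) (Real.rpow_pos_of_pos hV2pos _)
    set C1 := K * (2-y) / V1 with hC1
    set C2 := K * (y-1) / V2 with hC2
    have hpt : ∀ t ∈ Set.Icc (0:ℝ) 1, (t ^ a - t ^ b) * (1-t) ^ (y-1)
        ≤ C1 * (t ^ a - t ^ b) + C2 * ((t ^ a - t ^ b) * (1-t)) := by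
      intro t ht
      obtain ⟨ht0, ht1⟩ := ht
      have hft : 0 ≤ t ^ a - t ^ b := by
        rcases eq_or_lt_of_le ht0 with h | h
        · rw [← h, Real.zero_rpow ha0.ne', Real.zero_rpow hb0.ne']
          norm_num
        · have := Real.rpow_le_rpow_of_exponent_ge h ht1 hab.le
          linarith
      have hst : 0 ≤ 1 - t := by linarith
      rcases eq_or_lt_of_le hft with hf0 | hfpos
      · rw [← hf0]
        simp
      · have hamgm := Real.geom_mean_le_arith_mean2_weighted h2y hs0.le
          (div_nonneg hft hV1pos.le) (div_nonneg (mul_nonneg hft hst) hV2pos.le)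
          (by ring : (2-y) + (y-1) = 1)
        have hmul := mul_le_mul_of_nonneg_left hamgm hKpos.le
        have hfe : (t ^ a - t ^ b) ^ (2-y) * (t ^ a - t ^ b) ^ (y-1) = t ^ a - t ^ b := by
          rw [← Real.rpow_add hfpos, show (2-y)+(y-1) = (1:ℝ) by ring, Real.rpow_one]
        have hV1ne' : V1 ^ (2-y) ≠ 0 := (Real.rpow_pos_of_pos hV1pos _).ne'
        have hV2ne' : V2 ^ (y-1) ≠ 0 := (Real.rpow_pos_of_pos hV2pos _).ne'
        have hL : K * (((t ^ a - t ^ b)/V1) ^ (2-y) * (((t ^ a - t ^ b) * (1-t))/V2) ^ (y-1))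
            = (t ^ a - t ^ b) * (1-t) ^ (y-1) := by
          rw [Real.div_rpow hft hV1pos.le, Real.div_rpow (mul_nonneg hft hst) hV2pos.le,
            Real.mul_rpow hft hst, hK]
          field_simp
          linear_combination (1-t) ^ (y-1) * hfe
        have hR : K * ((2-y) * ((t ^ a - t ^ b)/V1) + (y-1) * (((t ^ a - t ^ b) * (1-t))/V2))
            = C1 * (t ^ a - t ^ b) + C2 * ((t ^ a - t ^ b) * (1-t)) := by
          rw [hC1, hC2]
          ring
        rw [hL, hR] at hmul
        exact hmul
    have hmono := intervalIntegral.integral_mono_on (μ := MeasureTheory.volume) (by norm_num : (0:ℝ) ≤ 1)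
      ((show Continuous fun t : ℝ => (t ^ a - t ^ b) * (1-t) ^ (y-1) from hcf.mul hcg).intervalIntegrable _ _)
      ((show Continuous fun t : ℝ =>
          C1 * (t ^ a - t ^ b) + C2 * ((t ^ a - t ^ b) * (1-t)) from (continuous_const.mul hcf).add
        (continuous_const.mul (hcf.mul hcs))).intervalIntegrable _ _) hpt
    have hRint : ∫ t in (0:ℝ)..1,
        (C1 * (t ^ a - t ^ b) + C2 * ((t ^ a - t ^ b) * (1-t))) = K := by
      rw [intervalIntegral.integral_add ((show Continuous fun t : ℝ => C1 * (t ^ a - t ^ b) from continuous_const.mul hcf).intervalIntegrable _ _)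
        ((show Continuous fun t : ℝ => C2 * ((t ^ a - t ^ b) * (1-t)) from continuous_const.mul (hcf.mul hcs)).intervalIntegrable _ _),
        intervalIntegral.integral_const_mul, intervalIntegral.integral_const_mul, hI1, hI2,
        hC1, hC2]
      field_simp
      ring
    have hDlink : B (a+1) y - B (b+1) y = ∫ t in (0:ℝ)..1, (t ^ a - t ^ b) * (1-t) ^ (y-1) := by
      rw [hBdef, hBdef, ← intervalIntegral.integral_sub ((show Continuous fun t : ℝ => t ^ a * (1-t) ^ (y-1) from hca.mul hcg).intervalIntegrable _ _)
        ((show Continuous fun t : ℝ => t ^ b * (1-t) ^ (y-1) from hcb.mul hcg).intervalIntegrable _ _)]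
      congr 1
      funext t
      ring
    have hKle : K ≤ R0 * ((5:ℝ)/9) ^ (y-1) := by
      have hstep : K ≤ R0 ^ (2-y) * ((5/9) * R0) ^ (y-1) := by
        rw [hK]
        exact mul_le_mul (Real.rpow_le_rpow hV1pos.le hV1le h2y)
          (Real.rpow_le_rpow hV2pos.le hV2le hs0.le)
          (Real.rpow_nonneg hV2pos.le _) (Real.rpow_nonneg hR0pos.le _)
      have heq2 : R0 ^ (2-y) * ((5/9) * R0) ^ (y-1) = R0 * ((5:ℝ)/9) ^ (y-1) := by
        rw [Real.mul_rpow (by norm_num : (0:ℝ) ≤ 5/9) hR0pos.le,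
          show R0 ^ (2-y) * ((5/9:ℝ) ^ (y-1) * R0 ^ (y-1))
            = (R0 ^ (2-y) * R0 ^ (y-1)) * (5/9:ℝ) ^ (y-1) from by ring,
          ← Real.rpow_add hR0pos, show (2-y)+(y-1) = (1:ℝ) by ring, Real.rpow_one]
      rw [heq2] at hstep
      exact hstep
    have hfin : cc * ((5:ℝ)/9) ^ (y-1) * (qb - qa) = -(R0 * ((5:ℝ)/9) ^ (y-1)) := by
      rw [hR0]; ring
    rw [ge_iff_le]
    rw [hRint] at hmono
    linarith [hDlink, hmono, hKle]
end

section
/- If either (y > 2 and 0 < a < b ≤ 1) or (0 < y < 1 and 2 ≤ a < b), then B(b+1,y) ≤ B(a+1,y) + (1/(8·ln(3/2)))·(5/9)^(y-1)·((4/9)^(b-1) - (4/9)^(a-1)). -/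
open Real MeasureTheory intervalIntegral

lemma bern_neg {s p : ℝ} (hs : -1 < s) (hp : -1 < p) (hp' : p ≤ 0) :
    1 + p * s ≤ (1 + s) ^ p := by
  have hs1 : (0:ℝ) < 1 + s := by linarith
  have h1 : (1 + s) ^ (-p) ≤ 1 + (-p) * s :=
    rpow_one_add_le_one_add_mul_self hs.le (by linarith) (by linarith)
  have hpos : (0:ℝ) < (1 + s) ^ (-p) := rpow_pos_of_pos hs1 _
  have h2 : (0:ℝ) < 1 + (-p) * s := lt_of_lt_of_le hpos h1
  have h3 : (1 + s) ^ p = ((1 + s) ^ (-p))⁻¹ := by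
    rw [← rpow_neg hs1.le, neg_neg]
  rw [h3]
  have h4 : (1 + p * s) * (1 + (-p) * s) ≤ 1 := by nlinarith [sq_nonneg (p*s)]
  by_cases hq : 1 + p * s ≤ 0
  · exact hq.trans (inv_pos.mpr hpos).le
  · push_neg at hq
    have h5 : (1 + p * s) * (1 + s) ^ (-p) ≤ 1 :=
      le_trans (mul_le_mul_of_nonneg_left h1 hq.le) h4
    rw [inv_eq_one_div, le_div_iff₀ hpos]
    exact h5

lemma bern_ge {s p : ℝ} (hs : -1 < s) (hp : -1 < p) (hp' : p ≤ 0 ∨ 1 ≤ p) :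
    1 + p * s ≤ (1 + s) ^ p := by
  rcases hp' with h | h
  · exact bern_neg hs hp h
  · exact one_add_mul_self_le_rpow_one_add hs.le h

lemma tangent_line {p u : ℝ} (hu : 0 < u) (hp : -1 < p) (hp' : p ≤ 0 ∨ 1 ≤ p) :
    (5/9:ℝ) ^ p + p * (5/9:ℝ) ^ (p - 1) * (u - 5/9) ≤ u ^ p := by
  have hc : (0:ℝ) < 5/9 := by norm_num
  have hs : -1 < u / (5/9) - 1 := by
    have : 0 < u / (5/9) := div_pos hu hc
    linarith
  have h := bern_ge hs hp hp'
  have he : (1 + (u / (5/9) - 1)) = u / (5/9) := by ring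
  rw [he] at h
  have h2 : (5/9:ℝ)^p * (1 + p * (u / (5/9) - 1)) ≤ (5/9:ℝ)^p * (u/(5/9))^p :=
    mul_le_mul_of_nonneg_left h (rpow_nonneg hc.le _)
  have h3 : (5/9:ℝ)^p * (u/(5/9))^p = u^p := by
    rw [← mul_rpow hc.le (by positivity)]
    have : (5/9:ℝ) * (u / (5/9)) = u := by field_simp
    rw [this]
  have h4 : (5/9:ℝ)^(p-1) = (5/9:ℝ)^p / (5/9) := rpow_sub_one (by norm_num) p
  rw [h3] at h2
  calc (5/9:ℝ) ^ p + p * (5/9:ℝ) ^ (p - 1) * (u - 5/9)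
      = (5/9:ℝ)^p * (1 + p * (u / (5/9) - 1)) := by rw [h4]; field_simp
    _ ≤ u ^ p := h2

lemma Pint (K₁ K₂ x : ℝ) (hx : 0 < x) :
    IntervalIntegrable (fun t : ℝ => t ^ x * (K₁ + K₂ * (4/9 - t))) volume 0 1 :=
  (intervalIntegrable_rpow (Or.inl hx.le)).mul_continuousOn (by fun_prop)

lemma Gint (K₁ K₂ x : ℝ) (hx : 0 < x) :
    ∫ t in (0:ℝ)..1, t ^ x * (K₁ + K₂ * (4/9 - t))
      = (K₁ + K₂ * (4/9)) / (x+1) - K₂ / (x+2) := by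
  have hx1 : x + 1 ≠ 0 := by positivity
  have hx2 : x + 1 + 1 ≠ 0 := by positivity
  have hcong : Set.EqOn (fun t : ℝ => t ^ x * (K₁ + K₂ * (4/9 - t)))
      (fun t : ℝ => (K₁ + K₂ * (4/9)) * t ^ x - K₂ * t ^ (x+1)) (Set.uIcc (0:ℝ) 1) := by
    intro t _
    rcases eq_or_ne t 0 with rfl | ht
    · simp [Real.zero_rpow hx.ne', Real.zero_rpow (show x + 1 ≠ 0 by positivity)]
    · simp only [Real.rpow_add_one ht]
      ring
  rw [integral_congr hcong,
    integral_sub ((intervalIntegrable_rpow (Or.inl hx.le)).const_mul _)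
      ((intervalIntegrable_rpow (Or.inl (by positivity))).const_mul _),
    intervalIntegral.integral_const_mul, intervalIntegral.integral_const_mul, integral_rpow (Or.inl (by linarith)),
    integral_rpow (Or.inl (by linarith))]
  rw [Real.one_rpow, Real.zero_rpow (by positivity), Real.one_rpow,
    Real.zero_rpow (by positivity : x + 1 + 1 ≠ 0)]
  field_simp
  ring

lemma fint (x y : ℝ) (hx : 0 < x) (hy : 0 < y) :
    IntervalIntegrable (fun t : ℝ => t ^ x * (1-t) ^ (y-1)) volume 0 1 := by
  rcases le_or_gt 1 y with h | h
  · apply ContinuousOn.intervalIntegrable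
    apply ContinuousOn.mul
    · exact continuousOn_id.rpow_const (fun t _ => Or.inr hx.le)
    · exact (continuousOn_const.sub continuousOn_id).rpow_const (fun t _ => Or.inr (by linarith))
  · have base : IntervalIntegrable (fun s : ℝ => s ^ (y-1)) volume 0 1 :=
      intervalIntegrable_rpow' (by linarith)
    have refl : IntervalIntegrable (fun t : ℝ => (1-t) ^ (y-1)) volume 0 1 := by
      have := base.comp_sub_left 1
      norm_num at this
      exact this.symm
    apply refl.mono_fun
    · apply Measurable.aestronglyMeasurable
      exact (measurable_id.pow measurable_const).mul ((measurable_const.sub measurable_id).pow measurable_const)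
    · filter_upwards [MeasureTheory.ae_restrict_mem measurableSet_uIoc] with t ht
      rw [Set.uIoc_of_le (by norm_num : (0:ℝ) ≤ 1)] at ht
      have h1 : (0:ℝ) ≤ (1-t) ^ (y-1) := rpow_nonneg (by linarith [ht.2]) _
      have h2 : t ^ x ≤ 1 := Real.rpow_le_one ht.1.le ht.2 hx.le
      have h3 : (0:ℝ) ≤ t ^ x := rpow_nonneg ht.1.le _
      simp only [norm_mul, Real.norm_eq_abs, abs_of_nonneg h1, abs_of_nonneg h3, norm_eq_abs]
      nlinarith

lemma case1_core (x y : ℝ) (hx0 : 0 ≤ x) (hx1 : x ≤ 1) (hy : 2 ≤ y) :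
    ((5/9:ℝ)^(y-1)/4)*(4/9:ℝ)^(x-1)
      ≤ ((5/9:ℝ)^(y-1) + ((y-1)*(5/9:ℝ)^(y-2))*(4/9))/(x+1)^2
        - ((y-1)*(5/9:ℝ)^(y-2))/(x+2)^2 := by
  have hK : (0:ℝ) < (5/9:ℝ)^(y-1) := rpow_pos_of_pos (by norm_num) _
  have h52 : (5/9:ℝ)^(y-2) = (5/9:ℝ)^(y-1)*(9/5) := by
    rw [show y-2 = (y-1)-1 by ring, rpow_sub_one (by norm_num : (5/9:ℝ) ≠ 0)]
    ring
  set A : ℝ := (x+1)^2 with hAdef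
  set B : ℝ := (x+2)^2 with hBdef
  have hA : (0:ℝ) < A := by positivity
  have hB : (0:ℝ) < B := by positivity
  -- chord bound for the rpow
  have hw : (4/9:ℝ)^(x-1) ≤ 1 + (1-x)*(5/4) := by
    have e1 : (4/9:ℝ)^(x-1) = (9/4:ℝ)^(1-x) := by
      rw [show (4:ℝ)/9 = ((9:ℝ)/4)⁻¹ by norm_num,
        Real.inv_rpow (by norm_num : (0:ℝ) ≤ 9/4), ← Real.rpow_neg (by norm_num : (0:ℝ) ≤ 9/4),
        neg_sub]
    have e2 : ((1:ℝ) + 5/4) ^ (1-x) ≤ 1 + (1-x)*(5/4) :=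
      rpow_one_add_le_one_add_mul_self (by norm_num) (by linarith) (by linarith)
    rw [e1]
    norm_num at e2 ⊢
    linarith
  -- nonnegativity of c(x)
  have hc : (0:ℝ) ≤ (4/9)/A - 1/B := by
    rw [sub_nonneg, div_le_div_iff₀ hB hA]
    nlinarith
  -- polynomial inequality (after clearing denominators)
  have hclear : (1/A + (9/5)*((4/9)/A - 1/B))*(A*B) = B + (9/5)*((4/9)*B - A) := by
    field_simp
  have hpoly' : ((1:ℝ)/4)*(1+(1-x)*(5/4))*(A*B) ≤ (1/A + (9/5)*((4/9)/A - 1/B))*(A*B) := by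
    rw [hclear, hAdef, hBdef]
    nlinarith [sq_nonneg (x-1), sq_nonneg x, mul_nonneg hx0 (sub_nonneg.2 hx1),
      sq_nonneg (x*(1-x)), mul_nonneg (mul_nonneg hx0 hx0) (sub_nonneg.2 hx1),
      mul_nonneg (mul_nonneg (sub_nonneg.2 hx1) (sub_nonneg.2 hx1)) hx0]
  have hpoly : ((1:ℝ)/4)*(1+(1-x)*(5/4)) ≤ 1/A + (9/5)*((4/9)/A - 1/B) :=
    le_of_mul_le_mul_right hpoly' (by positivity)
  -- use y - 1 ≥ 1
  have hy1 : (9/5:ℝ)*((4/9)/A - 1/B) ≤ (9/5)*(y-1)*((4/9)/A - 1/B) := by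
    have : (9/5:ℝ) ≤ (9/5)*(y-1) := by nlinarith
    exact mul_le_mul_of_nonneg_right this hc
  -- scalar inequality
  have hS : ((1:ℝ)/4)*(4/9:ℝ)^(x-1) ≤ (1 + (y-1)*(9/5)*(4/9))/A - ((y-1)*(9/5))/B := by
    have e3 : (1 + (y-1)*(9/5)*(4/9))/A - ((y-1)*(9/5))/B
        = 1/A + (9/5)*(y-1)*((4/9)/A - 1/B) := by ring
    rw [e3]
    have := mul_le_mul_of_nonneg_left hw (by norm_num : (0:ℝ) ≤ 1/4)
    linarith
  rw [h52]
  calc ((5/9:ℝ)^(y-1)/4)*(4/9:ℝ)^(x-1)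
      = (5/9:ℝ)^(y-1) * (((1:ℝ)/4)*(4/9:ℝ)^(x-1)) := by ring
    _ ≤ (5/9:ℝ)^(y-1) * ((1 + (y-1)*(9/5)*(4/9))/A - ((y-1)*(9/5))/B) :=
        mul_le_mul_of_nonneg_left hS hK.le
    _ = ((5/9:ℝ)^(y-1) + ((y-1)*((5/9:ℝ)^(y-1)*(9/5)))*(4/9))/A
        - ((y-1)*((5/9:ℝ)^(y-1)*(9/5)))/B := by ring

lemma case2_core (x y : ℝ) (hx : 2 ≤ x) (hy0 : 0 < y) (hy1 : y < 1) :
    ((5/9:ℝ)^(y-1)/4)*(4/9:ℝ)^(x-1)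
      ≤ ((5/9:ℝ)^(y-1) + ((y-1)*(5/9:ℝ)^(y-2))*(4/9))/(x+1)^2
        - ((y-1)*(5/9:ℝ)^(y-2))/(x+2)^2 := by
  have hK : (0:ℝ) < (5/9:ℝ)^(y-1) := rpow_pos_of_pos (by norm_num) _
  have hK2 : (0:ℝ) < (5/9:ℝ)^(y-2) := rpow_pos_of_pos (by norm_num) _
  set A : ℝ := (x+1)^2 with hAdef
  set B : ℝ := (x+2)^2 with hBdef
  have hA : (0:ℝ) < A := by positivity
  have hB : (0:ℝ) < B := by positivity
  -- the K₂·c(x) term is nonneg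
  have hc : (4/9)/A - 1/B ≤ 0 := by
    rw [sub_nonpos, div_le_div_iff₀ hA hB]
    nlinarith
  have hterm : (0:ℝ) ≤ ((y-1)*(5/9:ℝ)^(y-2))*((4/9)/A - 1/B) := by
    have h1 : (y-1)*(5/9:ℝ)^(y-2) ≤ 0 := by nlinarith
    nlinarith [mul_nonneg (neg_nonneg.2 h1) (neg_nonneg.2 hc)]
  -- log (3/2) ≥ 1/3
  have hL : (1/3:ℝ) ≤ Real.log (3/2) := by
    have h := Real.log_le_sub_one_of_pos (show (0:ℝ) < 2/3 by norm_num)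
    rw [show (3:ℝ)/2 = ((2:ℝ)/3)⁻¹ by norm_num, Real.log_inv]
    linarith
  -- exp lower bound
  have hE : 1 + (x-2)*Real.log (3/2) ≤ (3/2:ℝ)^(x-2) := by
    rw [Real.rpow_def_of_pos (by norm_num : (0:ℝ) < 3/2)]
    have := Real.add_one_le_exp (Real.log (3/2) * (x-2))
    linarith
  have hE0 : (0:ℝ) ≤ 1 + (x-2)*Real.log (3/2) := by nlinarith
  have hx1 : x + 1 ≤ 3*((3/2:ℝ)^(x-2)) := by nlinarith
  have hsq : (x+1)^2 ≤ 9*((9/4:ℝ)^(x-2)) := by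
    have h94 : ((3/2:ℝ)^(x-2))^(2:ℕ) = (9/4:ℝ)^(x-2) := by
      calc ((3/2:ℝ)^(x-2))^(2:ℕ) = ((3/2:ℝ)^(x-2))^((2:ℕ):ℝ) := (Real.rpow_natCast _ 2).symm
        _ = (3/2:ℝ)^((x-2)*((2:ℕ):ℝ)) := (Real.rpow_mul (by norm_num) _ _).symm
        _ = (3/2:ℝ)^(((2:ℕ):ℝ)*(x-2)) := by ring_nf
        _ = ((3/2:ℝ)^((2:ℕ):ℝ))^(x-2) := Real.rpow_mul (by norm_num) _ _
        _ = (9/4:ℝ)^(x-2) := by rw [Real.rpow_natCast]; norm_num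
    have hxp : (0:ℝ) ≤ x + 1 := by linarith
    nlinarith [rpow_pos_of_pos (show (0:ℝ) < 3/2 by norm_num) (x-2)]
  have hinv : (9/4:ℝ)^(x-2) * (4/9:ℝ)^(x-2) = 1 := by
    rw [← Real.mul_rpow (by norm_num) (by norm_num)]
    norm_num
  have h49pos : (0:ℝ) < (4/9:ℝ)^(x-2) := rpow_pos_of_pos (by norm_num) _
  have hkey : (4/9:ℝ)^(x-1) * A ≤ 4 := by
    have e : (4/9:ℝ)^(x-1) = (4/9) * (4/9:ℝ)^(x-2) := by
      rw [show x-1 = (x-2)+1 by ring, Real.rpow_add_one (by norm_num : (4:ℝ)/9 ≠ 0)]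
      ring
    rw [e, hAdef]
    calc 4/9 * (4/9:ℝ)^(x-2) * (x+1)^2 ≤ 4/9 * (4/9:ℝ)^(x-2) * (9*((9/4:ℝ)^(x-2))) := by
          apply mul_le_mul_of_nonneg_left hsq (by positivity)
      _ = 4 * ((9/4:ℝ)^(x-2) * (4/9:ℝ)^(x-2)) := by ring
      _ = 4 := by rw [hinv]; ring
  have hmain : ((5/9:ℝ)^(y-1)/4)*(4/9:ℝ)^(x-1) ≤ (5/9:ℝ)^(y-1)/A := by
    have h2 : (5/9:ℝ)^(y-1) * ((4/9:ℝ)^(x-1) * A) ≤ (5/9:ℝ)^(y-1) * 4 :=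
      mul_le_mul_of_nonneg_left hkey hK.le
    rw [div_mul_eq_mul_div, div_le_div_iff₀ (by norm_num : (0:ℝ) < 4) hA]
    nlinarith [h2]
  have e4 : ((5/9:ℝ)^(y-1) + ((y-1)*(5/9:ℝ)^(y-2))*(4/9))/A - ((y-1)*(5/9:ℝ)^(y-2))/B
      = (5/9:ℝ)^(y-1)/A + ((y-1)*(5/9:ℝ)^(y-2))*((4/9)/A - 1/B) := by ring
  rw [e4]
  calc ((5/9:ℝ)^(y-1)/4)*(4/9:ℝ)^(x-1) ≤ (5/9:ℝ)^(y-1)/A := hmain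
    _ ≤ (5/9:ℝ)^(y-1)/A + ((y-1)*(5/9:ℝ)^(y-2))*((4/9)/A - 1/B) := by linarith

lemma Hderiv (K₁ K₂ Cc : ℝ) {x : ℝ} (hx : 0 < x) :
    HasDerivAt (fun x : ℝ => (K₁ + K₂*(4/9))*(x+1)⁻¹ - K₂*(x+2)⁻¹ - Cc*(4/9:ℝ)^(x-1))
      (-((K₁ + K₂*(4/9))/(x+1)^2) + K₂/(x+2)^2 - Cc*((4/9:ℝ)^(x-1)*Real.log (4/9))) x := by
  have hd1 : HasDerivAt (fun x : ℝ => x + 1) 1 x := (hasDerivAt_id x).add_const 1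
  have hd2 : HasDerivAt (fun x : ℝ => x + 2) 1 x := (hasDerivAt_id x).add_const 2
  have hinv1 := hd1.inv (by positivity : x + 1 ≠ 0)
  have hinv2 := hd2.inv (by positivity : x + 2 ≠ 0)
  have h0 : HasDerivAt (fun u : ℝ => (4/9:ℝ)^u)
      ((4/9:ℝ)^(x-1)*Real.log (4/9)) (x-1) :=
    (Real.hasStrictDerivAt_const_rpow (by norm_num : (0:ℝ) < 4/9) (x-1)).hasDerivAt
  have h1 : HasDerivAt (fun x : ℝ => x - 1) 1 x := (hasDerivAt_id x).sub_const 1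
  have hr : HasDerivAt (fun x : ℝ => (4/9:ℝ)^(x-1))
      ((4/9:ℝ)^(x-1)*Real.log (4/9)) x := by
    simpa [Function.comp_def] using h0.comp x h1
  have := ((hinv1.const_mul (K₁ + K₂*(4/9))).sub (hinv2.const_mul K₂)).sub (hr.const_mul Cc)
  refine this.congr_deriv ?_
  ring

lemma Hanti (K₁ K₂ Cc a b : ℝ) (h0 : 0 < a) (hab : a ≤ b)
    (hd : ∀ x ∈ Set.Ioo a b,
      -((K₁ + K₂*(4/9))/(x+1)^2) + K₂/(x+2)^2 - Cc*((4/9:ℝ)^(x-1)*Real.log (4/9)) ≤ 0) :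
    (K₁ + K₂*(4/9))*(b+1)⁻¹ - K₂*(b+2)⁻¹ - Cc*(4/9:ℝ)^(b-1)
      ≤ (K₁ + K₂*(4/9))*(a+1)⁻¹ - K₂*(a+2)⁻¹ - Cc*(4/9:ℝ)^(a-1) := by
  have hanti : AntitoneOn (fun x : ℝ => (K₁ + K₂*(4/9))*(x+1)⁻¹ - K₂*(x+2)⁻¹ - Cc*(4/9:ℝ)^(x-1))
      (Set.Icc a b) := by
    apply antitoneOn_of_deriv_nonpos (convex_Icc a b)
    · intro x hx
      exact (Hderiv K₁ K₂ Cc (lt_of_lt_of_le h0 hx.1)).continuousAt.continuousWithinAt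
    · rw [interior_Icc]
      intro x hx
      exact (Hderiv K₁ K₂ Cc (lt_trans h0 hx.1)).differentiableAt.differentiableWithinAt
    · rw [interior_Icc]
      intro x hx
      rw [(Hderiv K₁ K₂ Cc (lt_trans h0 hx.1)).deriv]
      exact hd x hx
  exact hanti (Set.left_mem_Icc.2 hab) (Set.right_mem_Icc.2 hab) hab

theorem stmt12 (a b y : ℝ)
    (h : (2 < y ∧ 0 < a ∧ a < b ∧ b ≤ 1) ∨ (0 < y ∧ y < 1 ∧ 2 ≤ a ∧ a < b)) :
    B (b + 1) y ≤
      B (a + 1) y +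
        (1 / (8 * Real.log (3 / 2))) * ((5 : ℝ) / 9) ^ (y - 1) *
          (((4 : ℝ) / 9) ^ (b - 1) - ((4 : ℝ) / 9) ^ (a - 1)) := by
  have hL : 0 < Real.log (3/2) := Real.log_pos (by norm_num)
  have hlog49 : Real.log ((4:ℝ)/9) = -(2*Real.log (3/2)) := by
    rw [show (4:ℝ)/9 = ((3:ℝ)/2)^(-2:ℤ) by norm_num, Real.log_zpow]
    push_cast; ring
  have ha0 : 0 < a := by rcases h with ⟨_, h2, _, _⟩ | ⟨_, _, h3, _⟩ <;> linarith
  have hab : a < b := by rcases h with ⟨_, _, h3, _⟩ | ⟨_, _, _, h4⟩ <;> linarith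
  have hb0 : 0 < b := lt_trans ha0 hab
  have hy0 : 0 < y := by rcases h with ⟨h1, _, _, _⟩ | ⟨h1, _, _, _⟩ <;> linarith
  have hp' : y - 1 ≤ 0 ∨ 1 ≤ y - 1 := by
    rcases h with ⟨h1, _, _, _⟩ | ⟨_, h2, _, _⟩
    · right; linarith
    · left; linarith
  set K₁ : ℝ := (5/9:ℝ)^(y-1) with hK₁
  set K₂ : ℝ := (y-1)*(5/9:ℝ)^(y-2) with hK₂
  set Cc : ℝ := 1/(8*Real.log (3/2)) * K₁ with hCc
  -- pointwise integrand inequality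
  have hpoint : ∀ t ∈ Set.Icc (0:ℝ) 1,
      t^b*(1-t)^(y-1) + (t^a*(K₁+K₂*(4/9-t)) - t^b*(K₁+K₂*(4/9-t)))
        ≤ t^a*(1-t)^(y-1) := by
    intro t ht
    rcases eq_or_lt_of_le ht.2 with h1 | hlt
    · subst h1; simp
    · have h2 : K₁ + K₂*(4/9 - t) ≤ (1-t)^(y-1) := by
        have htan := tangent_line (p := y-1) (u := 1-t) (by linarith) (by linarith) hp'
        calc K₁ + K₂*(4/9 - t)
            = (5/9:ℝ)^(y-1) + (y-1)*(5/9:ℝ)^((y-1)-1)*((1-t) - 5/9) := by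
              rw [hK₁, hK₂, show (y-1)-1 = y-2 by ring]; ring
          _ ≤ (1-t)^(y-1) := htan
      have h1 : t^b ≤ t^a := by
        rcases eq_or_lt_of_le ht.1 with h0 | h0
        · rw [← h0, Real.zero_rpow hb0.ne', Real.zero_rpow ha0.ne']
        · exact Real.rpow_le_rpow_of_exponent_ge h0 hlt.le hab.le
      nlinarith [mul_nonneg (sub_nonneg.2 h1) (sub_nonneg.2 h2)]
  have hfa := fint a y ha0 hy0
  have hfb := fint b y hb0 hy0
  have hga := Pint K₁ K₂ a ha0
  have hgb := Pint K₁ K₂ b hb0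
  have hmono := intervalIntegral.integral_mono_on (by norm_num : (0:ℝ) ≤ 1)
    (hfb.add (hga.sub hgb)) hfa hpoint
  rw [intervalIntegral.integral_add hfb (hga.sub hgb),
    intervalIntegral.integral_sub hga hgb, Gint K₁ K₂ a ha0, Gint K₁ K₂ b hb0] at hmono
  -- antitone part
  have hd : ∀ x ∈ Set.Ioo a b,
      -((K₁ + K₂*(4/9))/(x+1)^2) + K₂/(x+2)^2 - Cc*((4/9:ℝ)^(x-1)*Real.log (4/9)) ≤ 0 := by
    intro x hx
    have hcore : (K₁/4)*(4/9:ℝ)^(x-1) ≤ (K₁ + K₂*(4/9))/(x+1)^2 - K₂/(x+2)^2 := by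
      rcases h with ⟨h1, _, _, h4⟩ | ⟨_, h2, h3, _⟩
      · have := case1_core x y (le_of_lt (lt_trans ha0 hx.1)) (by linarith [hx.2]) h1.le
        calc (K₁/4)*(4/9:ℝ)^(x-1) = ((5/9:ℝ)^(y-1)/4)*(4/9:ℝ)^(x-1) := by rw [hK₁]
          _ ≤ ((5/9:ℝ)^(y-1) + ((y-1)*(5/9:ℝ)^(y-2))*(4/9))/(x+1)^2
              - ((y-1)*(5/9:ℝ)^(y-2))/(x+2)^2 := this
          _ = (K₁ + K₂*(4/9))/(x+1)^2 - K₂/(x+2)^2 := by rw [hK₁, hK₂]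
      · have := case2_core x y (by linarith [hx.1]) hy0 h2
        calc (K₁/4)*(4/9:ℝ)^(x-1) = ((5/9:ℝ)^(y-1)/4)*(4/9:ℝ)^(x-1) := by rw [hK₁]
          _ ≤ ((5/9:ℝ)^(y-1) + ((y-1)*(5/9:ℝ)^(y-2))*(4/9))/(x+1)^2
              - ((y-1)*(5/9:ℝ)^(y-2))/(x+2)^2 := this
          _ = (K₁ + K₂*(4/9))/(x+1)^2 - K₂/(x+2)^2 := by rw [hK₁, hK₂]
    have heq : Cc*((4/9:ℝ)^(x-1)*Real.log (4/9)) = -((K₁/4)*(4/9:ℝ)^(x-1)) := by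
      rw [hlog49, hCc]
      field_simp
      ring
    rw [heq]
    linarith
  have hH := Hanti K₁ K₂ Cc a b ha0 hab.le hd
  -- bridges
  have ea1 : (K₁ + K₂*(4/9))*(a+1)⁻¹ - K₂*(a+2)⁻¹
      = (K₁ + K₂*(4/9))/(a+1) - K₂/(a+2) := by ring
  have eb1 : (K₁ + K₂*(4/9))*(b+1)⁻¹ - K₂*(b+2)⁻¹
      = (K₁ + K₂*(4/9))/(b+1) - K₂/(b+2) := by ring
  have hBa : B (a+1) y = ∫ t in (0:ℝ)..1, t^a*(1-t)^(y-1) := by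
    simp [B]
  have hBb : B (b+1) y = ∫ t in (0:ℝ)..1, t^b*(1-t)^(y-1) := by
    simp [B]
  have egoal : Cc * ((4/9:ℝ)^(b-1) - (4/9:ℝ)^(a-1))
      = Cc*(4/9:ℝ)^(b-1) - Cc*(4/9:ℝ)^(a-1) := by ring
  rw [hBa, hBb]
  linarith [hH, hmono, ea1, eb1, egoal]
end

section
/- For 0 < a < b and 0 < y < 1, ((b+y)/(a+y))^(1-y)·(a/b) > b^(b-1)(a+y)^(a+y-1) / (a^(a-1)(b+y)^(b+y-1)). -/
open Real

theorem stmt15 (a b y : ℝ) (ha : 0 < a) (hab : a < b) (hy0 : 0 < y) (hy1 : y < 1) :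
    ((b + y) / (a + y)) ^ (1 - y) * (a / b) >
      b ^ (b - 1) * (a + y) ^ (a + y - 1) / (a ^ (a - 1) * (b + y) ^ (b + y - 1)) := by
  have hb : (0:ℝ) < b := ha.trans hab
  have hay : (0:ℝ) < a + y := by linarith
  have hby : (0:ℝ) < b + y := by linarith
  -- key: a * log ((a+y)/a) < b * log ((b+y)/b)
  have hkey : a * Real.log ((a + y) / a) < b * Real.log ((b + y) / b) := by
    have hz : (0:ℝ) < y / b := div_pos hy0 hb
    have hp : (1:ℝ) < b / a := (one_lt_div ha).mpr hab
    have hber := one_add_mul_self_lt_rpow_one_add (by linarith : (-1:ℝ) ≤ y / b)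
      (ne_of_gt hz) hp
    have h1 : 1 + (b / a) * (y / b) = (a + y) / a := by
      field_simp
    have h2 : 1 + y / b = (b + y) / b := by field_simp
    rw [h1, h2] at hber
    have hlog := Real.log_lt_log (by positivity) hber
    rw [Real.log_rpow (by positivity)] at hlog
    have := (mul_lt_mul_iff_right₀ ha).mpr hlog
    calc a * Real.log ((a + y) / a) < a * (b / a * Real.log ((b + y) / b)) := this
      _ = b * Real.log ((b + y) / b) := by field_simp
  have hL : (0:ℝ) < ((b + y) / (a + y)) ^ (1 - y) * (a / b) := by positivity
  have hR : (0:ℝ) < b ^ (b - 1) * (a + y) ^ (a + y - 1) / (a ^ (a - 1) * (b + y) ^ (b + y - 1)) := by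
    positivity
  rw [gt_iff_lt, ← Real.log_lt_log_iff hR hL]
  rw [Real.log_mul (by positivity) (by positivity), Real.log_div (by positivity) (by positivity),
    Real.log_rpow (by positivity), Real.log_div (by positivity) (by positivity),
    Real.log_mul (by positivity) (by positivity), Real.log_mul (by positivity) (by positivity),
    Real.log_div ha.ne' hb.ne',
    Real.log_rpow hb, Real.log_rpow hay, Real.log_rpow ha, Real.log_rpow hby]
  rw [Real.log_div (ne_of_gt hay) (ne_of_gt ha), Real.log_div (ne_of_gt hby) (ne_of_gt hb)] at hkey
  nlinarith [hkey]
end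

section
/- For 0 < a < b and y ≥ 1, a(b+1)^(b+1)(a+y)^(a+y) / (b(a+1)^(a+1)(b+y)^(b+y)) ≤ (a(b+y))/(b(a+y)) · ((a+y+1)/(b+y+1))^y. -/
open Real

theorem stmt19 (a b y : ℝ) (ha : 0 < a) (hab : a < b) (hy : 1 ≤ y) :
    a * (b + 1) ^ (b + 1) * (a + y) ^ (a + y) /
        (b * (a + 1) ^ (a + 1) * (b + y) ^ (b + y)) ≤
      (a * (b + y)) / (b * (a + y)) * ((a + y + 1) / (b + y + 1)) ^ y := by
  have hb : 0 < b := ha.trans hab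
  have hy0 : 0 < y := lt_of_lt_of_le one_pos hy
  set f : ℝ → ℝ := fun x => (x+1) * Real.log (x+1) - (x+y+1) * Real.log (x+y)
      + y * Real.log (x+y+1) with hf
  have hderiv : ∀ x : ℝ, 0 < x → HasDerivAt f
      (Real.log (x+1) + 1 - (Real.log (x+y) + (x+y+1)/(x+y)) + y/(x+y+1)) x := by
    intro x hx
    have h1 : (0:ℝ) < x + 1 := by linarith
    have h2 : (0:ℝ) < x + y := by linarith
    have h3 : (0:ℝ) < x + y + 1 := by linarith
    have d1 : HasDerivAt (fun x : ℝ => x + 1) 1 x := (hasDerivAt_id x).add_const 1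
    have d2 : HasDerivAt (fun x : ℝ => x + y) 1 x := (hasDerivAt_id x).add_const y
    have d3 : HasDerivAt (fun x : ℝ => x + y + 1) 1 x :=
      ((hasDerivAt_id x).add_const y).add_const 1
    have e1 : HasDerivAt (fun x : ℝ => (x+1) * Real.log (x+1))
        (1 * Real.log (x+1) + (x+1) * (1/(x+1))) x := d1.mul (d1.log h1.ne')
    have e2 : HasDerivAt (fun x : ℝ => (x+y+1) * Real.log (x+y))
        (1 * Real.log (x+y) + (x+y+1) * (1/(x+y))) x := d3.mul (d2.log h2.ne')
    have e3 : HasDerivAt (fun x : ℝ => y * Real.log (x+y+1))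
        (y * (1/(x+y+1))) x := (d3.log h3.ne').const_mul y
    have := (e1.sub e2).add e3
    convert this using 1
    rfl
    rfl
    rfl
    rw [one_mul, one_mul, mul_one_div, mul_one_div, mul_one_div, div_self h1.ne']
  have hneg : ∀ x : ℝ, 0 < x →
      Real.log (x+1) + 1 - (Real.log (x+y) + (x+y+1)/(x+y)) + y/(x+y+1) ≤ 0 := by
    intro x hx
    have h1 : (0:ℝ) < x + 1 := by linarith
    have h2 : (0:ℝ) < x + y := by linarith
    have h3 : (0:ℝ) < x + y + 1 := by linarith
    have hlog : Real.log ((x+1)/(x+y)) ≤ (x+1)/(x+y) - 1 :=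
      Real.log_le_sub_one_of_pos (div_pos h1 h2)
    rw [Real.log_div h1.ne' h2.ne'] at hlog
    have e1 : (x+1)/(x+y) - (x+y+1)/(x+y) = -(y/(x+y)) := by
      field_simp
      ring
    have e2 : y/(x+y+1) ≤ y/(x+y) :=
      div_le_div_of_nonneg_left hy0.le h2 (by linarith)
    linarith
  have hmono : f b ≤ f a := by
    have hcont : ContinuousOn f (Set.Icc a b) := fun x hx =>
      ((hderiv x (lt_of_lt_of_le ha hx.1)).continuousAt).continuousWithinAt
    have hdiff : DifferentiableOn ℝ f (interior (Set.Icc a b)) := fun x hx => by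
      rw [interior_Icc] at hx
      exact ((hderiv x (ha.trans hx.1)).differentiableAt).differentiableWithinAt
    have hanti : AntitoneOn f (Set.Icc a b) :=
      antitoneOn_of_deriv_nonpos (convex_Icc a b) hcont hdiff (fun x hx => by
        rw [interior_Icc] at hx
        rw [(hderiv x (ha.trans hx.1)).deriv]
        exact hneg x (ha.trans hx.1))
    exact hanti (Set.left_mem_Icc.mpr hab.le) (Set.right_mem_Icc.mpr hab.le) hab.le
  simp only [hf] at hmono
  have ha1 : (0:ℝ) < a + 1 := by linarith
  have hb1 : (0:ℝ) < b + 1 := by linarith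
  have hay : (0:ℝ) < a + y := by linarith
  have hby : (0:ℝ) < b + y := by linarith
  have hay1 : (0:ℝ) < a + y + 1 := by linarith
  have hby1 : (0:ℝ) < b + y + 1 := by linarith
  have hLpos : 0 < a * (b + 1) ^ (b + 1) * (a + y) ^ (a + y) /
      (b * (a + 1) ^ (a + 1) * (b + y) ^ (b + y)) := by positivity
  have hRpos : 0 < (a * (b + y)) / (b * (a + y)) * ((a + y + 1) / (b + y + 1)) ^ y := by
    positivity
  rw [← Real.log_le_log_iff hLpos hRpos,
    Real.log_div (by positivity) (by positivity),
    Real.log_mul (by positivity) (by positivity),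
    Real.log_mul (by positivity) (by positivity),
    Real.log_mul (by positivity) (by positivity),
    Real.log_mul (by positivity) (by positivity),
    Real.log_mul (by positivity) (by positivity),
    Real.log_div (by positivity) (by positivity),
    Real.log_mul (by positivity) (by positivity),
    Real.log_mul hb.ne' hay.ne',
    Real.log_rpow hb1, Real.log_rpow hay, Real.log_rpow ha1, Real.log_rpow hby,
    Real.log_rpow (div_pos hay1 hby1), Real.log_div hay1.ne' hby1.ne']
  linarith [hmono]
end
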